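/- arXiv:1211.2341 — 5 statements merged into one kernel-verified Lean document; each statement's English description precedes it below -/
import Mathlib

section
/- Let n ≥ 1 and C₁, C₂ > 0. There exists a constant C > 0, depending only on n, C₁ and C₂, such that the following holds. Let Q ⊆ ℝⁿ be an open convex set with B(0,1) ⊆ Q ⊆ B(0,n). Let w be of class C² on a neighbourhood of cl(Q) with |Dw(q)| ≤ C₁ for all q ∈ Q. For each q ∈ Q let (C_{ij,kℓ}(q))_{1≤i,j,k,ℓ≤n} be real numbers, depending measurably on q, with C_{ij,kℓ}(q) = C_{ji,kℓ}(q), satisfying the MTW sign condition at every q, and such that |C_{ii,kℓ}(q)| ≤ C₂ whenever k = i or ℓ = i. Define the symmetric matrix M(q) by M_{ij}(q) := ∂²_{ij}w(q) − Σ_{k,ℓ} C_{ij,kℓ}(q) ∂_k w(q) ∂_ℓ w(q), and assume M(q) is positive semidefinite for every q ∈ Q. Then ∫_Q ‖M(q)‖ dq ≤ C, where ‖·‖ is the operator norm. -/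
open MeasureTheory
open scoped BigOperators ENNReal

/-- A tensor `B` satisfies the MTW sign condition if
`∑ B i j k l ξ i ξ j η k η l ≥ 0` for all orthogonal vectors `ξ, η`. -/
def MTWCondition {n : ℕ} (B : Fin n → Fin n → Fin n → Fin n → ℝ) : Prop :=
  ∀ ξ η : Fin n → ℝ, (∑ i, ξ i * η i) = 0 →
    0 ≤ ∑ i, ∑ j, ∑ k, ∑ l, B i j k l * ξ i * ξ j * η k * η l

/-- The operator norm of a real `n×n` matrix, viewed as a linear operator on
Euclidean space. -/
noncomputable def matrixOpNorm {n : ℕ} (A : Matrix (Fin n) (Fin n) ℝ) : ℝ :=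
  ‖LinearMap.toContinuousLinearMap (Matrix.toEuclideanLin A)‖

lemma euclid_abs_coord_le_norm {n : ℕ} (x : EuclideanSpace ℝ (Fin n)) (i : Fin n) :
    |x i| ≤ ‖x‖ := by
  rw [EuclideanSpace.norm_eq, ← Real.sqrt_sq_eq_abs]
  apply Real.sqrt_le_sqrt
  have : |x i| ^ 2 ≤ ∑ j, ‖x j‖ ^ 2 := by
    apply Finset.single_le_sum (f := fun j => ‖x j‖ ^ 2) (fun j _ => by positivity)
      (Finset.mem_univ i) |>.trans_eq' ?_
    simp [Real.norm_eq_abs]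
  simpa [sq_abs] using this

lemma euclid_norm_le_sum {n : ℕ} (x : EuclideanSpace ℝ (Fin n)) :
    ‖x‖ ≤ ∑ i, |x i| := by
  rw [EuclideanSpace.norm_eq]
  have h1 : ∑ j, ‖x j‖ ^ 2 ≤ (∑ i, |x i|) ^ 2 := by
    simpa [Real.norm_eq_abs] using
      Finset.sum_sq_le_sq_sum_of_nonneg (s := Finset.univ) (f := fun i => |x i|)
        (fun i _ => abs_nonneg _)
  calc Real.sqrt (∑ j, ‖x j‖ ^ 2) ≤ Real.sqrt ((∑ i, |x i|) ^ 2) := Real.sqrt_le_sqrt h1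
    _ = ∑ i, |x i| := Real.sqrt_sq (by positivity)

lemma matrixOpNorm_le_sum {n : ℕ} (A : Matrix (Fin n) (Fin n) ℝ) :
    matrixOpNorm A ≤ ∑ i, ∑ j, |A i j| := by
  apply ContinuousLinearMap.opNorm_le_bound
  · positivity
  · intro x
    have hTx : ∀ j : Fin n, (LinearMap.toContinuousLinearMap (Matrix.toEuclideanLin A) x) j
        = ∑ k, A j k * x k := by
      intro j
      simp [Matrix.toEuclideanLin_apply, Matrix.mulVec, dotProduct]
    calc ‖LinearMap.toContinuousLinearMap (Matrix.toEuclideanLin A) x‖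
        ≤ ∑ j, |(LinearMap.toContinuousLinearMap (Matrix.toEuclideanLin A) x) j| :=
          euclid_norm_le_sum _
      _ ≤ ∑ j, ∑ k, |A j k| * ‖x‖ := by
          apply Finset.sum_le_sum; intro j _
          rw [hTx j]
          calc |∑ k, A j k * x k| ≤ ∑ k, |A j k * x k| := Finset.abs_sum_le_sum_abs _ _
            _ ≤ ∑ k, |A j k| * ‖x‖ := by
                apply Finset.sum_le_sum; intro k _
                rw [abs_mul]
                exact mul_le_mul_of_nonneg_left (euclid_abs_coord_le_norm x k) (abs_nonneg _)
      _ = (∑ i, ∑ j, |A i j|) * ‖x‖ := by rw [Finset.sum_mul]; congr 1; ext j; rw [Finset.sum_mul]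

lemma psd_quadform {n : ℕ} {A : Matrix (Fin n) (Fin n) ℝ} (hA : A.PosSemidef)
    (x : Fin n → ℝ) : 0 ≤ ∑ i, ∑ j, A i j * x i * x j := by
  have := hA.dotProduct_mulVec_nonneg x
  simpa [dotProduct, Matrix.mulVec, Finset.mul_sum, mul_comm, mul_left_comm,
    mul_assoc] using this

lemma psd_diag_nonneg {n : ℕ} {A : Matrix (Fin n) (Fin n) ℝ} (hA : A.PosSemidef)
    (i : Fin n) : 0 ≤ A i i := by
  have := psd_quadform hA (fun a => if a = i then 1 else 0)
  simpa [mul_ite, ite_mul, Finset.sum_ite_eq, Finset.sum_ite_eq'] using this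

lemma psd_symm {n : ℕ} {A : Matrix (Fin n) (Fin n) ℝ} (hA : A.PosSemidef)
    (i j : Fin n) : A j i = A i j := by
  have := congrFun (congrFun hA.1 i) j
  simpa [Matrix.conjTranspose_apply] using this

lemma psd_abs_entry {n : ℕ} {A : Matrix (Fin n) (Fin n) ℝ} (hA : A.PosSemidef)
    (i j : Fin n) : |A i j| ≤ (A i i + A j j) / 2 := by
  rcases eq_or_ne i j with rfl | hij
  · rw [abs_of_nonneg (psd_diag_nonneg hA i)]; linarith [psd_diag_nonneg hA i]
  · have hs := psd_symm hA i j
    have key : ∀ ε : ℝ, ε = 1 ∨ ε = -1 →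
        0 ≤ A i i + A j j + ε * (2 * A i j) := by
      intro ε hε
      have h := psd_quadform hA (fun a => (if a = i then 1 else 0) + ε * (if a = j then 1 else 0))
      have hε2 : ε * ε = 1 := by rcases hε with rfl | rfl <;> norm_num
      have expand : (∑ a, ∑ b, A a b * ((if a = i then (1:ℝ) else 0) + ε * (if a = j then 1 else 0))
          * ((if b = i then 1 else 0) + ε * (if b = j then 1 else 0)))
          = A i i + ε * ε * A j j + ε * (A i j + A j i) := by
        simp only [add_mul, mul_add, Finset.sum_add_distrib, mul_ite, ite_mul,
          mul_one, mul_zero, one_mul, zero_mul, Finset.sum_ite_eq, Finset.sum_ite_eq',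
          Finset.mem_univ, if_true, hij, hij.symm, if_false]
        ring
      rw [expand, hε2] at h
      rw [hs] at h
      linarith
    have k1 := key 1 (Or.inl rfl)
    have k2 := key (-1) (Or.inr rfl)
    rw [abs_le]; constructor <;> linarith

/-- 1D slice bound -/
lemma slice_lintegral_bound {s : Set ℝ} (hso : IsOpen s) (hsc : Convex ℝ s)
    {R C₁ K : ℝ} (hR : 0 < R) (hK : 0 ≤ K) (hC₁ : 0 ≤ C₁)
    (hsub : s ⊆ Set.Ioo (-R) R)
    {g h : ℝ → ℝ}
    (hd : ∀ t ∈ closure s, HasDerivAt g (h t) t)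
    (hc : ContinuousOn h (closure s))
    (hg : ∀ t ∈ closure s, |g t| ≤ C₁)
    (hpos : ∀ t ∈ s, 0 ≤ h t + K) :
    ∫⁻ t in s, ENNReal.ofReal (h t + K) ≤ ENNReal.ofReal (2 * C₁ + 2 * R * K) := by
  rcases s.eq_empty_or_nonempty with rfl | ⟨t₀, ht₀⟩
  · simp
  -- s is a nonempty bounded open convex set, hence an open interval
  have hbdd_above : BddAbove s := ⟨R, fun x hx => (hsub hx).2.le⟩
  have hbdd_below : BddBelow s := ⟨-R, fun x hx => (hsub hx).1.le⟩
  set a := sInf s with ha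
  set b := sSup s with hb
  have hne : s.Nonempty := ⟨t₀, ht₀⟩
  -- a < b
  obtain ⟨ε, hε, hball⟩ := Metric.isOpen_iff.1 hso t₀ ht₀
  have hu : t₀ - ε / 2 ∈ s := hball (Metric.mem_ball.2 (by
    rw [Real.dist_eq, abs_of_neg (by linarith : t₀ - ε / 2 - t₀ < 0)]; linarith))
  have hv : t₀ + ε / 2 ∈ s := hball (Metric.mem_ball.2 (by
    rw [Real.dist_eq, abs_of_pos (by linarith : (0:ℝ) < t₀ + ε / 2 - t₀)]; linarith))
  have hab : a < b := lt_of_le_of_lt (csInf_le hbdd_below hu)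
    (lt_of_lt_of_le (by linarith) (le_csSup hbdd_above hv))
  -- s = Ioo a b
  have hsIoo : s = Set.Ioo a b := by
    apply Set.Subset.antisymm
    · intro t ht
      constructor
      · rcases lt_or_eq_of_le (csInf_le hbdd_below ht) with h' | h'
        · exact h'
        · exfalso
          obtain ⟨δ, hδ, hballδ⟩ := Metric.isOpen_iff.1 hso t ht
          have : t - δ / 2 ∈ s := hballδ (Metric.mem_ball.2 (by
            rw [Real.dist_eq, abs_of_neg (by linarith : t - δ / 2 - t < 0)]; linarith))
          have := csInf_le hbdd_below this
          rw [← h'] at this; simp [ha] at this; linarith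
      · rcases lt_or_eq_of_le (le_csSup hbdd_above ht) with h' | h'
        · exact h'
        · exfalso
          obtain ⟨δ, hδ, hballδ⟩ := Metric.isOpen_iff.1 hso t ht
          have : t + δ / 2 ∈ s := hballδ (Metric.mem_ball.2 (by
            rw [Real.dist_eq, abs_of_pos (by linarith : (0:ℝ) < t + δ / 2 - t)]; linarith))
          have := le_csSup hbdd_above this
          rw [h'] at this; linarith
    · intro t ht
      obtain ⟨u, hu', hut⟩ := exists_lt_of_csInf_lt hne ht.1
      obtain ⟨v, hv', htv⟩ := exists_lt_of_lt_csSup hne ht.2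
      exact hsc.ordConnected.out hu' hv' ⟨hut.le, htv.le⟩
  have hcls : closure s = Set.Icc a b := by rw [hsIoo, closure_Ioo hab.ne]
  have haR : -R ≤ a := le_csInf hne (fun x hx => (hsub hx).1.le)
  have hbR : b ≤ R := csSup_le hne (fun x hx => (hsub hx).2.le)
  have hamem : a ∈ closure s := by rw [hcls]; exact ⟨le_refl a, hab.le⟩
  have hbmem : b ∈ closure s := by rw [hcls]; exact ⟨hab.le, le_refl b⟩
  -- continuity / integrability
  have hcIcc : ContinuousOn (fun t => h t + K) (Set.Icc a b) := by
    rw [← hcls]; exact hc.add continuousOn_const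
  have hint : IntegrableOn (fun t => h t + K) (Set.Ioo a b) := by
    apply (hcIcc.integrableOn_Icc).mono_set Set.Ioo_subset_Icc_self
  have hae : 0 ≤ᵐ[volume.restrict (Set.Ioo a b)] (fun t => h t + K) := by
    filter_upwards [ae_restrict_mem measurableSet_Ioo] with t ht
    simpa using hpos t (hsIoo ▸ ht)
  rw [hsIoo, ← ofReal_integral_eq_lintegral_ofReal hint hae]
  apply ENNReal.ofReal_le_ofReal
  -- compute the integral
  have hIoc : ∫ t in Set.Ioo a b, (h t + K) = ∫ t in a..b, (h t + K) := by
    rw [intervalIntegral.integral_of_le hab.le, ← integral_Ioc_eq_integral_Ioo]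
  have hhint : IntervalIntegrable h volume a b := by
    apply ContinuousOn.intervalIntegrable
    rwa [Set.uIcc_of_le hab.le, ← hcls]
  have hftc : ∫ t in a..b, h t = g b - g a := by
    apply intervalIntegral.integral_eq_sub_of_hasDerivAt
    · intro t ht
      rw [Set.uIcc_of_le hab.le, ← hcls] at ht
      exact hd t ht
    · exact hhint
  have hsplit : ∫ t in a..b, (h t + K) = (g b - g a) + (b - a) * K := by
    rw [intervalIntegral.integral_add hhint (intervalIntegrable_const), hftc,
      intervalIntegral.integral_const, smul_eq_mul]
  rw [hIoc, hsplit]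
  have h1 := hg a hamem
  have h2 := hg b hbmem
  have hba : b - a ≤ 2 * R := by linarith
  have : (b - a) * K ≤ 2 * R * K := mul_le_mul_of_nonneg_right hba hK
  rw [abs_le] at h1 h2
  linarith

lemma coord_integral_bound {m : ℕ} {Q U : Set (EuclideanSpace ℝ (Fin (m+1)))}
    (hQo : IsOpen Q) (hQc : Convex ℝ Q)
    (hQn : Q ⊆ Metric.ball (0 : EuclideanSpace ℝ (Fin (m+1))) (m+1))
    (hUo : IsOpen U) (hQU : closure Q ⊆ U)
    {C₁ K : ℝ} (hC₁ : 0 ≤ C₁) (hK : 0 ≤ K)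
    (g : EuclideanSpace ℝ (Fin (m+1)) → ℝ)
    (G : EuclideanSpace ℝ (Fin (m+1)) → (EuclideanSpace ℝ (Fin (m+1)) →L[ℝ] ℝ))
    (H : EuclideanSpace ℝ (Fin (m+1)) → ℝ) (i : Fin (m+1))
    (hGd : ∀ x ∈ U, HasFDerivAt g (G x) x)
    (hH : ∀ x ∈ U, H x = G x (EuclideanSpace.single i 1))
    (hHc : ContinuousOn H U)
    (hg : ∀ x ∈ closure Q, |g x| ≤ C₁)
    (hpos : ∀ x ∈ Q, 0 ≤ H x + K)
    (y : Fin m → ℝ) :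
    ∫⁻ t, (Q.indicator fun x => ENNReal.ofReal (H x + K))
        ((MeasurableEquiv.toLp 2 (Fin (m+1) → ℝ)) (i.insertNth t y))
      ≤ (Set.univ.pi fun _ : Fin m => Set.Icc (-(m+1:ℝ)) (m+1)).indicator
          (fun _ => ENNReal.ofReal (2 * C₁ + 2 * (m+1) * K)) y := by
  classical
  set ψ := (MeasurableEquiv.toLp 2 (Fin (m+1) → ℝ)) with hψ
  set v : EuclideanSpace ℝ (Fin (m+1)) := EuclideanSpace.single i 1 with hv
  set c : EuclideanSpace ℝ (Fin (m+1)) := ψ (i.insertNth 0 y) with hc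
  have hψcoord : ∀ (x : Fin (m+1) → ℝ) (j : Fin (m+1)), (ψ x) j = x j := by
    intro x j
    rw [hψ, MeasurableEquiv.coe_toLp]
  have hφ : ∀ t, ψ (i.insertNth t y) = c + t • v := by
    intro t
    ext j
    rw [hψcoord]
    have hrhs : (c + t • v) j = c j + t * v j := rfl
    rw [hrhs, hc, hψcoord, hv]
    refine Fin.succAboveCases i ?_ ?_ j
    · simp [Fin.insertNth_apply_same, EuclideanSpace.single_apply]
    · intro k
      simp [Fin.insertNth_apply_succAbove, EuclideanSpace.single_apply,
        (Fin.succAbove_ne i k)]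
  have hφcont : Continuous (fun t : ℝ => ψ (i.insertNth t y)) := by
    have : (fun t : ℝ => ψ (i.insertNth t y)) = fun t => c + t • v := funext hφ
    rw [this]
    exact continuous_const.add (continuous_id.smul continuous_const)
  have hder : ∀ t : ℝ, HasDerivAt (fun t => ψ (i.insertNth t y)) v t := by
    intro t
    have : (fun t : ℝ => ψ (i.insertNth t y)) = fun t => c + t • v := funext hφ
    rw [this]
    simpa using ((hasDerivAt_id t).smul_const v).const_add c
  set s : Set ℝ := (fun t : ℝ => ψ (i.insertNth t y)) ⁻¹' Q with hs
  have hsopen : IsOpen s := hQo.preimage hφcont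
  have hsconv : Convex ℝ s := by
    intro t₁ h₁ t₂ h₂ α β hα hβ hαβ
    have key : ψ (i.insertNth (α * t₁ + β * t₂) y)
        = α • ψ (i.insertNth t₁ y) + β • ψ (i.insertNth t₂ y) := by
      rw [hφ, hφ, hφ]
      have : α • (c + t₁ • v) + β • (c + t₂ • v) = (α + β) • c + (α * t₁ + β * t₂) • v := by
        module
      rw [this, hαβ, one_smul]
    show ψ (i.insertNth (α • t₁ + β • t₂) y) ∈ Q
    rw [smul_eq_mul, smul_eq_mul, key]
    exact hQc h₁ h₂ hα hβ hαβ
  have hmaps : ∀ t ∈ s, ψ (i.insertNth t y) ∈ Q := fun t ht => ht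
  have hsub : s ⊆ Set.Ioo (-(m+1:ℝ)) (m+1) := by
    intro t ht
    have hb : ‖ψ (i.insertNth t y)‖ < (m+1 : ℝ) := by
      have := hQn (hmaps t ht)
      rwa [mem_ball_zero_iff] at this
    have hco : |(ψ (i.insertNth t y)) i| ≤ ‖ψ (i.insertNth t y)‖ :=
      euclid_abs_coord_le_norm _ i
    rw [hψcoord, Fin.insertNth_apply_same] at hco
    rw [Set.mem_Ioo, ← abs_lt]
    exact lt_of_le_of_lt hco hb
  have hclos : ∀ t ∈ closure s, ψ (i.insertNth t y) ∈ closure Q := by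
    intro t ht
    exact hφcont.closure_preimage_subset Q ht
  -- rewrite integrand as indicator over s
  have hrw : ∀ t : ℝ, (Q.indicator fun x => ENNReal.ofReal (H x + K)) (ψ (i.insertNth t y))
      = s.indicator (fun t => ENNReal.ofReal (H (ψ (i.insertNth t y)) + K)) t := by
    intro t
    by_cases ht : t ∈ s
    · rw [Set.indicator_of_mem ht, Set.indicator_of_mem (hmaps t ht)]
    · rw [Set.indicator_of_notMem (show ψ (i.insertNth t y) ∉ Q from ht),
        Set.indicator_of_notMem ht]
  simp only [hrw]
  rw [lintegral_indicator hsopen.measurableSet]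
  -- main bound via the 1D lemma
  have hbound : ∫⁻ t in s, ENNReal.ofReal (H (ψ (i.insertNth t y)) + K)
      ≤ ENNReal.ofReal (2 * C₁ + 2 * (m+1) * K) := by
    apply slice_lintegral_bound hsopen hsconv (by positivity : (0:ℝ) < (m+1:ℝ)) hK hC₁ hsub
      (g := fun t => g (ψ (i.insertNth t y)))
    · intro t ht
      have hxU : ψ (i.insertNth t y) ∈ U := hQU (hclos t ht)
      have := (hGd _ hxU).comp_hasDerivAt t (hder t)
      rw [hH _ hxU]
      exact this
    · exact hHc.comp hφcont.continuousOn (fun t ht => hQU (hclos t ht))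
    · intro t ht
      exact hg _ (hclos t ht)
    · intro t ht
      exact hpos _ (hmaps t ht)
  by_cases hy : y ∈ Set.univ.pi fun _ : Fin m => Set.Icc (-(m+1:ℝ)) (m+1)
  · rw [Set.indicator_of_mem hy]
    exact hbound
  · -- slice is empty
    have hsempty : s = ∅ := by
      by_contra hne
      rcases Set.nonempty_iff_ne_empty.2 hne with ⟨t, ht⟩
      apply hy
      intro j _
      have hb : ‖ψ (i.insertNth t y)‖ < (m+1 : ℝ) := by
        have := hQn (hmaps t ht)
        rwa [mem_ball_zero_iff] at this
      have hco : |(ψ (i.insertNth t y)) (i.succAbove j)| ≤ ‖ψ (i.insertNth t y)‖ :=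
        euclid_abs_coord_le_norm _ _
      rw [hψcoord, Fin.insertNth_apply_succAbove] at hco
      have : |y j| ≤ (m+1:ℝ) := le_of_lt (lt_of_le_of_lt hco hb)
      rw [abs_le] at this
      exact ⟨this.1, this.2⟩
    rw [hsempty]
    simp

lemma fubini_coord {m : ℕ} (i : Fin (m+1)) {F : EuclideanSpace ℝ (Fin (m+1)) → ℝ≥0∞}
    (hF : Measurable F) :
    ∫⁻ x, F x = ∫⁻ y : Fin m → ℝ, ∫⁻ t : ℝ,
      F ((MeasurableEquiv.toLp 2 (Fin (m+1) → ℝ)) (i.insertNth t y)) := by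
  have h1 := ((EuclideanSpace.volume_preserving_symm_measurableEquiv_toLp (Fin (m+1))).symm).lintegral_comp
    hF
  rw [← h1]
  have h2 := (measurePreserving_piFinSuccAbove (fun _ : Fin (m+1) => (volume : Measure ℝ)) i).symm
  have hmeas : Measurable fun p : ℝ × (Fin m → ℝ) =>
      F ((MeasurableEquiv.toLp 2 (Fin (m+1) → ℝ))
        ((MeasurableEquiv.piFinSuccAbove (fun _ : Fin (m+1) => ℝ) i).symm p)) :=
    (hF.comp (MeasurableEquiv.toLp 2 (Fin (m+1) → ℝ)).measurable).comp
      (MeasurableEquiv.piFinSuccAbove (fun _ : Fin (m+1) => ℝ) i).symm.measurable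
  have h3 := h2.lintegral_comp
    (hF.comp (MeasurableEquiv.toLp 2 (Fin (m+1) → ℝ)).measurable)
  have h4 := MeasureTheory.lintegral_prod_symm (μ := (volume : Measure ℝ))
    (ν := Measure.pi fun _ : Fin m => (volume : Measure ℝ)) _ hmeas.aemeasurable
  calc ∫⁻ a, F ((MeasurableEquiv.toLp 2 (Fin (m+1) → ℝ)) a) ∂volume
      = ∫⁻ a, (F ∘ ⇑(MeasurableEquiv.toLp 2 (Fin (m+1) → ℝ))) a
          ∂(Measure.pi fun _ : Fin (m+1) => (volume : Measure ℝ)) := by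
        rw [← volume_pi]; rfl
    _ = ∫⁻ p : ℝ × (Fin m → ℝ), (F ∘ ⇑(MeasurableEquiv.toLp 2 (Fin (m+1) → ℝ)))
          ((MeasurableEquiv.piFinSuccAbove (fun _ : Fin (m+1) => ℝ) i).symm p)
          ∂((volume : Measure ℝ).prod (Measure.pi fun _ : Fin m => (volume : Measure ℝ))) := by
        rw [h3]
    _ = ∫⁻ y : Fin m → ℝ, (∫⁻ t : ℝ,
          F ((MeasurableEquiv.toLp 2 (Fin (m+1) → ℝ)) (i.insertNth t y)))
          ∂(Measure.pi fun _ : Fin m => (volume : Measure ℝ)) := by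
        simp only [Function.comp_apply]
        rw [h4]
        rfl
    _ = ∫⁻ y : Fin m → ℝ, ∫⁻ t : ℝ,
          F ((MeasurableEquiv.toLp 2 (Fin (m+1) → ℝ)) (i.insertNth t y)) := by
        rw [← volume_pi]

lemma coord_setLIntegral_bound {m : ℕ} {Q U : Set (EuclideanSpace ℝ (Fin (m+1)))}
    (hQo : IsOpen Q) (hQc : Convex ℝ Q)
    (hQn : Q ⊆ Metric.ball (0 : EuclideanSpace ℝ (Fin (m+1))) (m+1))
    (hUo : IsOpen U) (hQU : closure Q ⊆ U)
    {C₁ K : ℝ} (hC₁ : 0 ≤ C₁) (hK : 0 ≤ K)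
    (g : EuclideanSpace ℝ (Fin (m+1)) → ℝ)
    (G : EuclideanSpace ℝ (Fin (m+1)) → (EuclideanSpace ℝ (Fin (m+1)) →L[ℝ] ℝ))
    (H : EuclideanSpace ℝ (Fin (m+1)) → ℝ) (i : Fin (m+1))
    (hHm : Measurable H)
    (hGd : ∀ x ∈ U, HasFDerivAt g (G x) x)
    (hH : ∀ x ∈ U, H x = G x (EuclideanSpace.single i 1))
    (hHc : ContinuousOn H U)
    (hg : ∀ x ∈ closure Q, |g x| ≤ C₁)
    (hpos : ∀ x ∈ Q, 0 ≤ H x + K) :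
    ∫⁻ x in Q, ENNReal.ofReal (H x + K)
      ≤ ENNReal.ofReal (2 * C₁ + 2 * (m+1) * K) * (ENNReal.ofReal (2 * (m+1)))^m := by
  rw [← lintegral_indicator hQo.measurableSet]
  have hFmeas : Measurable (Q.indicator fun x => ENNReal.ofReal (H x + K)) :=
    ((ENNReal.measurable_ofReal.comp (hHm.add_const K)).indicator hQo.measurableSet)
  rw [fubini_coord i hFmeas]
  calc ∫⁻ y : Fin m → ℝ, ∫⁻ t : ℝ, (Q.indicator fun x => ENNReal.ofReal (H x + K))
        ((MeasurableEquiv.toLp 2 (Fin (m+1) → ℝ)) (i.insertNth t y))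
      ≤ ∫⁻ y : Fin m → ℝ, (Set.univ.pi fun _ : Fin m => Set.Icc (-(m+1:ℝ)) (m+1)).indicator
          (fun _ => ENNReal.ofReal (2 * C₁ + 2 * (m+1) * K)) y :=
        lintegral_mono (fun y => coord_integral_bound hQo hQc hQn hUo hQU hC₁ hK g G H i
          hGd hH hHc hg hpos y)
    _ = ENNReal.ofReal (2 * C₁ + 2 * (m+1) * K)
          * volume (Set.univ.pi fun _ : Fin m => Set.Icc (-(m+1:ℝ)) (m+1)) := by
        rw [lintegral_indicator_const (MeasurableSet.univ_pi fun _ => measurableSet_Icc)]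
    _ = ENNReal.ofReal (2 * C₁ + 2 * (m+1) * K) * (ENNReal.ofReal (2 * (m+1)))^m := by
        congr 1
        rw [volume_pi_pi]
        simp only [Real.volume_Icc]
        rw [Finset.prod_const]
        congr 1
        · ring_nf
        · simp


lemma mtw_lower_bound {n : ℕ} (B : Fin n → Fin n → Fin n → Fin n → ℝ)
    (hmtw : MTWCondition B) (i : Fin n) (p : Fin n → ℝ) {C₁ C₂ : ℝ}
    (hC₁ : 0 ≤ C₁) (hC₂ : 0 ≤ C₂) (hp : ∀ k, |p k| ≤ C₁)
    (hB : ∀ k l, (k = i ∨ l = i) → |B i i k l| ≤ C₂) :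
    -(2 * C₂ * C₁^2 * n^2) ≤ ∑ k, ∑ l, B i i k l * p k * p l := by
  classical
  set η : Fin n → ℝ := fun k => if k = i then 0 else p k with hη
  set ξ : Fin n → ℝ := fun a => if a = i then (1:ℝ) else 0 with hξ
  have horth : (∑ k, ξ k * η k) = 0 := by
    apply Finset.sum_eq_zero
    intro k _
    by_cases h : k = i <;> simp [hξ, hη, h]
  have h0 := hmtw ξ η horth
  have hsimp : (∑ a, ∑ b, ∑ k, ∑ l, B a b k l * ξ a * ξ b * η k * η l)
      = ∑ k, ∑ l, B i i k l * η k * η l := by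
    have step : ∀ a b : Fin n, (∑ k, ∑ l, B a b k l * ξ a * ξ b * η k * η l)
        = ξ a * (ξ b * (∑ k, ∑ l, B a b k l * η k * η l)) := by
      intro a b
      simp only [Finset.mul_sum]
      refine Finset.sum_congr rfl fun k _ => ?_
      refine Finset.sum_congr rfl fun l _ => ?_
      ring
    calc (∑ a, ∑ b, ∑ k, ∑ l, B a b k l * ξ a * ξ b * η k * η l)
        = ∑ a, ξ a * (∑ b, ξ b * (∑ k, ∑ l, B a b k l * η k * η l)) := by
          refine Finset.sum_congr rfl fun a _ => ?_
          rw [Finset.mul_sum]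
          exact Finset.sum_congr rfl fun b _ => step a b
      _ = ∑ k, ∑ l, B i i k l * η k * η l := by
          simp only [hξ, ite_mul, one_mul, zero_mul, Finset.sum_ite_eq',
            Finset.mem_univ, if_true]
  rw [hsimp] at h0
  have hηb : ∀ k, |η k| ≤ C₁ := by
    intro k
    by_cases h : k = i <;> simp [hη, h, hC₁, hp k]
  have key : ∀ (k l : Fin n) (u v : ℝ), |u| ≤ C₁ → |v| ≤ C₁ → |B i i k l| ≤ C₂ →
      |B i i k l * u * v| ≤ C₂ * C₁^2 := by
    intro k l u v hu hv hBB
    rw [abs_mul, abs_mul, pow_two, ← mul_assoc]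
    exact mul_le_mul (mul_le_mul hBB hu (abs_nonneg _) hC₂) hv (abs_nonneg _)
      (by positivity)
  have hdiff : |∑ k, ∑ l, (B i i k l * p k * p l - B i i k l * η k * η l)|
      ≤ 2 * C₂ * C₁^2 * n^2 := by
    calc |∑ k, ∑ l, (B i i k l * p k * p l - B i i k l * η k * η l)|
        ≤ ∑ k, |∑ l, (B i i k l * p k * p l - B i i k l * η k * η l)| :=
          Finset.abs_sum_le_sum_abs _ _
      _ ≤ ∑ k : Fin n, ∑ l : Fin n, |B i i k l * p k * p l - B i i k l * η k * η l| :=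
          Finset.sum_le_sum (fun k _ => Finset.abs_sum_le_sum_abs _ _)
      _ ≤ ∑ k : Fin n, ∑ l : Fin n, 2 * C₂ * C₁^2 := by
          apply Finset.sum_le_sum
          intro k _
          apply Finset.sum_le_sum
          intro l _
          by_cases hor : k = i ∨ l = i
          · have hBb := hB k l hor
            calc |B i i k l * p k * p l - B i i k l * η k * η l|
                ≤ |B i i k l * p k * p l| + |B i i k l * η k * η l| := abs_sub _ _
              _ ≤ C₂ * C₁^2 + C₂ * C₁^2 :=
                  add_le_add (key k l _ _ (hp k) (hp l) hBb)
                    (key k l _ _ (hηb k) (hηb l) hBb)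
              _ = 2 * C₂ * C₁^2 := by ring
          · push_neg at hor
            have h1 : η k = p k := by simp [hη, hor.1]
            have h2 : η l = p l := by simp [hη, hor.2]
            rw [h1, h2, sub_self, abs_zero]
            positivity
      _ = 2 * C₂ * C₁^2 * n^2 := by
          rw [Finset.sum_const, Finset.sum_const, Finset.card_univ, Fintype.card_fin,
            nsmul_eq_mul, nsmul_eq_mul]
          push_cast
          ring
  have hsplit : (∑ k, ∑ l, B i i k l * p k * p l)
      = (∑ k, ∑ l, B i i k l * η k * η l)
        + ∑ k, ∑ l, (B i i k l * p k * p l - B i i k l * η k * η l) := by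
    rw [← Finset.sum_add_distrib]
    refine Finset.sum_congr rfl fun k _ => ?_
    rw [← Finset.sum_add_distrib]
    refine Finset.sum_congr rfl fun l _ => ?_
    ring
  rw [hsplit]
  have := abs_le.1 hdiff
  linarith [h0, this.1]

lemma psd_opNorm_le_trace {n : ℕ} {A : Matrix (Fin n) (Fin n) ℝ} (hA : A.PosSemidef) :
    matrixOpNorm A ≤ n * ∑ i, A i i := by
  calc matrixOpNorm A ≤ ∑ i, ∑ j, |A i j| := matrixOpNorm_le_sum A
    _ ≤ ∑ i : Fin n, ∑ j : Fin n, (A i i + A j j) / 2 :=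
        Finset.sum_le_sum fun i _ => Finset.sum_le_sum fun j _ => psd_abs_entry hA i j
    _ = n * ∑ i, A i i := by
        simp only [add_div, Finset.sum_add_distrib, Finset.sum_const, Finset.card_univ,
          Fintype.card_fin, nsmul_eq_mul, ← Finset.sum_div, Finset.mul_sum]
        rw [show ((n:ℝ)) * ((∑ i : Fin n, A i i)/2) = ∑ i : Fin n, (n:ℝ) * (A i i / 2) from by
          rw [Finset.sum_div, Finset.mul_sum]]
        rw [← Finset.sum_add_distrib]
        refine Finset.sum_congr rfl fun i _ => ?_
        ring

/-- abstract form of the `L¹` bound of Lemma 3.2. For a normalized convex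
set `B(0,1) ⊆ Q ⊆ B(0,n)`, a `C²` function `w` with `|Dw| ≤ C₁` on `Q`, and measurable
coefficients `𝒞_{ij,kℓ}(q)` symmetric in `(i,j)`, satisfying the MTW sign condition, and
with `|𝒞_{ii,kℓ}| ≤ C₂` whenever `k = i` or `ℓ = i`, if the matrix
`M_{ij} = ∂²_{ij}w − ∑ 𝒞_{ij,kℓ} ∂_k w ∂_ℓ w` is positive semidefinite on `Q`, then
`∫_Q ‖M‖ ≤ C` with `C` depending only on `n`, `C₁`, `C₂`. -/
theorem L1_bound_normalized_section {n : ℕ} (hn : 1 ≤ n)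
    (C₁ C₂ : ℝ) (hC₁ : 0 < C₁) (hC₂ : 0 < C₂) :
    ∃ C : ℝ, 0 < C ∧
    ∀ (Q : Set (EuclideanSpace ℝ (Fin n))), IsOpen Q → Convex ℝ Q →
      Metric.ball (0 : EuclideanSpace ℝ (Fin n)) 1 ⊆ Q →
      Q ⊆ Metric.ball (0 : EuclideanSpace ℝ (Fin n)) n →
    ∀ (w : EuclideanSpace ℝ (Fin n) → ℝ) (U : Set (EuclideanSpace ℝ (Fin n))),
      IsOpen U → closure Q ⊆ U → ContDiffOn ℝ 2 w U →
      (∀ q ∈ Q, ‖fderiv ℝ w q‖ ≤ C₁) →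
    ∀ (𝒞 : EuclideanSpace ℝ (Fin n) → Fin n → Fin n → Fin n → Fin n → ℝ),
      (∀ i j k l, Measurable fun q => 𝒞 q i j k l) →
      (∀ q ∈ Q, ∀ i j k l, 𝒞 q i j k l = 𝒞 q j i k l) →
      (∀ q ∈ Q, MTWCondition (𝒞 q)) →
      (∀ q ∈ Q, ∀ i k l : Fin n, (k = i ∨ l = i) → |𝒞 q i i k l| ≤ C₂) →
    ∀ (M : EuclideanSpace ℝ (Fin n) → Matrix (Fin n) (Fin n) ℝ),
      (∀ q i j, M q i j =
        iteratedFDeriv ℝ 2 w q ![EuclideanSpace.single i 1, EuclideanSpace.single j 1]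
          - ∑ k, ∑ l, 𝒞 q i j k l * fderiv ℝ w q (EuclideanSpace.single k 1)
              * fderiv ℝ w q (EuclideanSpace.single l 1)) →
      (∀ q ∈ Q, (M q).PosSemidef) →
      ∫⁻ q in Q, ENNReal.ofReal (matrixOpNorm (M q)) ≤ ENNReal.ofReal C := by
  obtain ⟨m, rfl⟩ : ∃ m, n = m + 1 := ⟨n - 1, (Nat.succ_pred_eq_of_pos hn).symm⟩
  set K : ℝ := 2 * C₂ * C₁^2 * (m+1)^2 with hKdef
  have hK : 0 ≤ K := by positivity
  set L : ℝ := 2*C₁ + 2*(m+1)*K with hLdef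
  have hL : 0 < L := by positivity
  refine ⟨(m+1) * ((m+1) * (L * (2*(m+1))^m)), by positivity, ?_⟩
  intro Q hQo hQc hQb hQn w U hUo hQU hw hDw 𝒞 h𝒞m h𝒞sym h𝒞mtw h𝒞bd M hM hMpsd
  have hQn' : Q ⊆ Metric.ball (0 : EuclideanSpace ℝ (Fin (m+1))) ((m:ℝ)+1) := by
    intro x hx
    have := hQn hx
    rwa [Nat.cast_add, Nat.cast_one] at this
  set e : Fin (m+1) → EuclideanSpace ℝ (Fin (m+1)) :=
    fun i => EuclideanSpace.single i 1 with he
  set g : Fin (m+1) → EuclideanSpace ℝ (Fin (m+1)) → ℝ :=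
    fun i x => fderiv ℝ w x (e i) with hg
  set D : EuclideanSpace ℝ (Fin (m+1)) →
      (EuclideanSpace ℝ (Fin (m+1)) →L[ℝ] EuclideanSpace ℝ (Fin (m+1)) →L[ℝ] ℝ) :=
    fun x => fderiv ℝ (fderiv ℝ w) x with hD
  set H : Fin (m+1) → EuclideanSpace ℝ (Fin (m+1)) → ℝ :=
    fun i x => D x (e i) (e i) with hH
  -- basic differentiability facts
  have hw2 : ContDiffOn ℝ 1 (fderiv ℝ w) U :=
    ContDiffOn.fderiv_of_isOpen (m := 1) hw hUo (by norm_num)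
  have hdiff1 : ∀ x ∈ U, DifferentiableAt ℝ (fderiv ℝ w) x := fun x hx =>
    (hw2.differentiableOn (by norm_num)).differentiableAt (hUo.mem_nhds hx)
  have hDc : ContinuousOn D U :=
    (ContDiffOn.fderiv_of_isOpen (m := 0) hw2 hUo (by norm_num)).continuousOn
  have hGd : ∀ (i : Fin (m+1)), ∀ x ∈ U, HasFDerivAt (g i) ((D x).flip (e i)) x := by
    intro i x hx
    have hc : HasFDerivAt (fderiv ℝ w) (D x) x := (hdiff1 x hx).hasFDerivAt
    have := hc.clm_apply (hasFDerivAt_const (e i) x)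
    simpa using this
  have hHeval : ∀ (i : Fin (m+1)) (x : EuclideanSpace ℝ (Fin (m+1))),
      H i x = ((D x).flip (e i)) (e i) := by
    intro i x
    simp [hH, ContinuousLinearMap.flip_apply]
  have hHc : ∀ i : Fin (m+1), ContinuousOn (H i) U := by
    intro i
    have h1 : Continuous fun T : EuclideanSpace ℝ (Fin (m+1)) →L[ℝ]
        (EuclideanSpace ℝ (Fin (m+1)) →L[ℝ] ℝ) => T (e i) (e i) := by
      have := ((ContinuousLinearMap.apply ℝ ℝ (e i)).continuous).comp
        ((ContinuousLinearMap.apply ℝ (EuclideanSpace ℝ (Fin (m+1)) →L[ℝ] ℝ)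
          (e i)).continuous)
      exact this
    exact h1.comp_continuousOn hDc
  have hHm : ∀ i : Fin (m+1), Measurable (H i) := by
    intro i
    have h1 : Measurable fun x => D x (e i) :=
      measurable_fderiv_apply_const ℝ (fderiv ℝ w) (e i)
    exact ((ContinuousLinearMap.apply ℝ ℝ (e i)).continuous.measurable).comp h1
  have hiter : ∀ (q : EuclideanSpace ℝ (Fin (m+1))) (i j : Fin (m+1)),
      iteratedFDeriv ℝ 2 w q ![e i, e j] = D q (e i) (e j) := by
    intro q i j
    rw [iteratedFDeriv_two_apply]
    simp [hD]
  -- bound on |∂ᵢ w| on Q and closure Q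
  have hgQ : ∀ (i : Fin (m+1)), ∀ y ∈ Q, |g i y| ≤ C₁ := by
    intro i y hy
    calc |g i y| = ‖fderiv ℝ w y (e i)‖ := by rw [hg]; rfl
      _ ≤ ‖fderiv ℝ w y‖ * ‖e i‖ := ContinuousLinearMap.le_opNorm _ _
      _ = ‖fderiv ℝ w y‖ := by rw [he, EuclideanSpace.norm_single]; simp
      _ ≤ C₁ := hDw y hy
  have hgcont : ∀ i : Fin (m+1), ContinuousOn (g i) U := by
    intro i
    exact ((ContinuousLinearMap.apply ℝ ℝ (e i)).continuous).comp_continuousOn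
      hw2.continuousOn
  have hgcl : ∀ (i : Fin (m+1)), ∀ x ∈ closure Q, |g i x| ≤ C₁ := by
    intro i x hx
    have hxU : x ∈ U := hQU hx
    have hca : ContinuousAt (g i) x := (hgcont i).continuousAt (hUo.mem_nhds hxU)
    haveI hne : (nhdsWithin x Q).NeBot := mem_closure_iff_nhdsWithin_neBot.1 hx
    have htend : Filter.Tendsto (fun y => |g i y|) (nhdsWithin x Q) (nhds |g i x|) :=
      (hca.continuousWithinAt.tendsto).abs
    exact le_of_tendsto htend
      (Filter.eventually_of_mem self_mem_nhdsWithin (fun y hy => hgQ i y hy))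
  -- diagonal bounds
  have hdiag : ∀ q ∈ Q, ∀ i : Fin (m+1), M q i i ≤ H i q + K ∧ 0 ≤ H i q + K := by
    intro q hq i
    set p : Fin (m+1) → ℝ := fun k => fderiv ℝ w q (e k) with hp'
    have hp : ∀ k, |p k| ≤ C₁ := fun k => hgQ k q hq
    have hS := mtw_lower_bound (𝒞 q) (h𝒞mtw q hq) i p hC₁.le hC₂.le hp
      (fun k l hkl => h𝒞bd q hq i k l hkl)
    have hMeq : M q i i = H i q - ∑ k, ∑ l, 𝒞 q i i k l * p k * p l := by
      rw [hM q i i, show H i q = D q (e i) (e i) from rfl, ← hiter q i i]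
    have hle : M q i i ≤ H i q + K := by
      rw [hMeq]
      have : -(2 * C₂ * C₁^2 * ((m:ℝ)+1)^2) ≤ ∑ k, ∑ l, 𝒞 q i i k l * p k * p l := by
        convert hS using 3
        push_cast
        ring
      rw [hKdef]
      linarith
    exact ⟨hle, le_trans (psd_diag_nonneg (hMpsd q hq) i) hle⟩
  -- operator norm bound
  have hopn : ∀ q ∈ Q, matrixOpNorm (M q) ≤ ((m:ℝ)+1) * ∑ i, (H i q + K) := by
    intro q hq
    calc matrixOpNorm (M q) ≤ (m+1) * ∑ i, M q i i := by
          have := psd_opNorm_le_trace (hMpsd q hq)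
          convert this using 2
          push_cast
          ring
      _ ≤ ((m:ℝ)+1) * ∑ i, (H i q + K) := by
          apply mul_le_mul_of_nonneg_left _ (by positivity)
          exact Finset.sum_le_sum fun i _ => (hdiag q hq i).1
  -- assemble
  calc ∫⁻ q in Q, ENNReal.ofReal (matrixOpNorm (M q))
      ≤ ∫⁻ q in Q, ENNReal.ofReal ((m:ℝ)+1) * ∑ i, ENNReal.ofReal (H i q + K) := by
        apply setLIntegral_mono' hQo.measurableSet
        intro q hq
        calc ENNReal.ofReal (matrixOpNorm (M q))
            ≤ ENNReal.ofReal (((m:ℝ)+1) * ∑ i, (H i q + K)) :=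
              ENNReal.ofReal_le_ofReal (hopn q hq)
          _ = ENNReal.ofReal ((m:ℝ)+1) * ENNReal.ofReal (∑ i, (H i q + K)) :=
              ENNReal.ofReal_mul (by positivity)
          _ = ENNReal.ofReal ((m:ℝ)+1) * ∑ i, ENNReal.ofReal (H i q + K) := by
              rw [ENNReal.ofReal_sum_of_nonneg (fun i _ => (hdiag q hq i).2)]
    _ = ENNReal.ofReal ((m:ℝ)+1) * ∑ i, ∫⁻ q in Q, ENNReal.ofReal (H i q + K) := by
        rw [lintegral_const_mul]
        · congr 1
          rw [lintegral_finset_sum]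
          intro i _
          exact (ENNReal.measurable_ofReal.comp ((hHm i).add_const K))
        · apply Finset.measurable_sum
          intro i _
          exact (ENNReal.measurable_ofReal.comp ((hHm i).add_const K))
    _ ≤ ENNReal.ofReal ((m:ℝ)+1) * ∑ _i : Fin (m+1),
          (ENNReal.ofReal L * (ENNReal.ofReal (2 * ((m:ℝ)+1)))^m) := by
        apply mul_le_mul_right (Finset.sum_le_sum fun i _ => ?_)
        have := coord_setLIntegral_bound hQo hQc hQn' hUo hQU hC₁.le hK (g i)
          (fun x => (D x).flip (e i)) (H i) i (hHm i) (hGd i)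
          (fun x _ => hHeval i x) (hHc i) (hgcl i)
          (fun x hx => (hdiag x hx i).2)
        convert this using 2
    _ = ENNReal.ofReal (((m:ℝ)+1) * (((m:ℝ)+1) * (L * (2*((m:ℝ)+1))^m))) := by
        rw [Finset.sum_const, Finset.card_univ, Fintype.card_fin, nsmul_eq_mul]
        rw [ENNReal.ofReal_mul (by positivity : (0:ℝ) ≤ (m:ℝ)+1),
          ENNReal.ofReal_mul (by positivity : (0:ℝ) ≤ (m:ℝ)+1),
          ENNReal.ofReal_mul hL.le,
          ENNReal.ofReal_pow (by positivity : (0:ℝ) ≤ 2*((m:ℝ)+1))]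
        congr 2
        rw [← ENNReal.ofReal_natCast (m+1)]
        congr 1
        push_cast
        ring
end

section
/- Let n ≥ 1 and C₁, C₂, λ, δ > 0 with λ ≤ 1. There exists a constant C ≥ 1, depending only on n, C₁, C₂, λ and δ, such that the following holds. Let Q ⊆ ℝⁿ be an open convex set with B(0,1) ⊆ Q ⊆ B(0,n). Let w be of class C² on a neighbourhood of cl(Q) with |Dw(q)| ≤ C₁ for all q ∈ Q. For each q ∈ Q let (C_{ij,kℓ}(q))_{1≤i,j,k,ℓ≤n} be real numbers, depending measurably on q, with C_{ij,kℓ}(q) = C_{ji,kℓ}(q), satisfying the MTW sign condition at every q, and such that |C_{ii,kℓ}(q)| ≤ C₂ whenever k = i or ℓ = i. Define M_{ij}(q) := ∂²_{ij}w(q) − Σ_{k,ℓ} C_{ij,kℓ}(q) ∂_k w(q) ∂_ℓ w(q), assume M(q) is positive semidefinite and λ ≤ det M(q) ≤ 1/λ for every q ∈ Q, and let Q' ⊆ Q be a Lebesgue-measurable set with |Q'| ≥ δ. Then the Lebesgue measure of the set {q ∈ Q' : (1/C)·Id ≤ M(q) ≤ C·Id} is at least 1/C, where the inequalities between symmetric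 matrices are in the sense of quadratic forms. -/
open MeasureTheory
open scoped BigOperators ENNReal

section Aux
open Matrix

lemma psd_smul_one {n : ℕ} {c : ℝ} (hc : 0 ≤ c) :
    (c • (1 : Matrix (Fin n) (Fin n) ℝ)).PosSemidef := by
  rw [Matrix.smul_one_eq_diagonal]
  exact Matrix.PosSemidef.diagonal fun i => hc

lemma eig_sandwich {n : ℕ} (M : Matrix (Fin n) (Fin n) ℝ) (hM : M.PosSemidef)
    (c T : ℝ) (hc : ∀ i, c ≤ hM.1.eigenvalues i) (hT : ∀ i, hM.1.eigenvalues i ≤ T) :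
    (M - c • 1).PosSemidef ∧ (T • 1 - M).PosSemidef := by
  classical
  set V : Matrix (Fin n) (Fin n) ℝ := (hM.1.eigenvectorUnitary : Matrix (Fin n) (Fin n) ℝ) with hVdef
  have hV : V * star V = 1 := (Matrix.mem_unitaryGroup_iff).mp hM.1.eigenvectorUnitary.2
  have hspec : M = V * diagonal hM.1.eigenvalues * star V := by
    have := hM.1.spectral_theorem
    have hdiag : diagonal (RCLike.ofReal ∘ hM.1.eigenvalues) = diagonal hM.1.eigenvalues := by
      congr 1
    rw [hdiag] at this
    exact this
  have hsm : ∀ a : ℝ, a • (1 : Matrix (Fin n) (Fin n) ℝ) = V * (a • 1) * star V := by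
    intro a
    rw [mul_smul_comm, smul_mul_assoc, mul_one, hV]
  have hds : ∀ a : ℝ, diagonal hM.1.eigenvalues - a • (1 : Matrix (Fin n) (Fin n) ℝ)
      = diagonal (fun i => hM.1.eigenvalues i - a) := by
    intro a
    rw [Matrix.smul_one_eq_diagonal, Matrix.diagonal_sub]
  have hds' : ∀ a : ℝ, a • (1 : Matrix (Fin n) (Fin n) ℝ) - diagonal hM.1.eigenvalues
      = diagonal (fun i => a - hM.1.eigenvalues i) := by
    intro a
    rw [Matrix.smul_one_eq_diagonal, Matrix.diagonal_sub]
  constructor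
  · have h2 : M - c • 1 = V * (diagonal (fun i => hM.1.eigenvalues i - c)) * star V := by
      conv_lhs => rw [hspec, hsm c]
      rw [← Matrix.sub_mul, ← Matrix.mul_sub, hds]
    rw [h2]
    exact (Matrix.PosSemidef.diagonal fun i => sub_nonneg.2 (hc i)).mul_mul_conjTranspose_same V
  · have h2 : T • (1:Matrix (Fin n) (Fin n) ℝ) - M = V * (diagonal (fun i => T - hM.1.eigenvalues i)) * star V := by
      conv_lhs => rw [hspec, hsm T]
      rw [← Matrix.sub_mul, ← Matrix.mul_sub, hds']
    rw [h2]
    exact (Matrix.PosSemidef.diagonal fun i => sub_nonneg.2 (hT i)).mul_mul_conjTranspose_same V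

lemma trace_eq_sum_eig {n : ℕ} (M : Matrix (Fin n) (Fin n) ℝ) (hM : M.IsHermitian) :
    M.trace = ∑ i, hM.eigenvalues i := by
  classical
  have hdiag : diagonal (RCLike.ofReal ∘ hM.eigenvalues) = diagonal hM.eigenvalues := by congr 1
  conv_lhs => rw [hM.spectral_theorem, hdiag]
  rw [Unitary.conjStarAlgAut_apply, Matrix.trace_mul_cycle]
  rw [(Matrix.mem_unitaryGroup_iff').mp hM.eigenvectorUnitary.2, one_mul, Matrix.trace_diagonal]

lemma eig_bounds {n : ℕ} (M : Matrix (Fin n) (Fin n) ℝ) (hM : M.PosSemidef)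
    (T lam : ℝ) (hT : 0 < T) (hlam : 0 < lam)
    (htr : M.trace ≤ T) (hdet : lam ≤ M.det) :
    ∀ i, lam / T ^ (n - 1) ≤ hM.1.eigenvalues i ∧ hM.1.eigenvalues i ≤ T := by
  classical
  set μ := hM.1.eigenvalues with hμ
  have hnn : ∀ i, 0 ≤ μ i := hM.eigenvalues_nonneg
  have hsum : ∑ i, μ i ≤ T := by rw [← trace_eq_sum_eig M hM.1]; exact htr
  have hub : ∀ i, μ i ≤ T := fun i =>
    le_trans (Finset.single_le_sum (fun j _ => hnn j) (Finset.mem_univ i)) hsum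
  intro i
  refine ⟨?_, hub i⟩
  have hprod : lam ≤ μ i * ∏ j ∈ Finset.univ.erase i, μ j := by
    have : M.det = ∏ j, μ j := by
      have := hM.1.det_eq_prod_eigenvalues
      simpa using this
    rw [this, ← Finset.mul_prod_erase _ _ (Finset.mem_univ i)] at hdet
    exact hdet
  set P := ∏ j ∈ Finset.univ.erase i, μ j with hP
  have hPnn : 0 ≤ P := Finset.prod_nonneg fun j _ => hnn j
  have hPpos : 0 < P := by
    rcases hPnn.lt_or_eq with h | h
    · exact h
    · exfalso; rw [← h, mul_zero] at hprod; linarith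
  have hPle : P ≤ T ^ (n - 1) := by
    calc P ≤ ∏ j ∈ Finset.univ.erase i, T :=
          Finset.prod_le_prod (fun j _ => hnn j) (fun j _ => hub j)
    _ = T ^ (n - 1) := by
        rw [Finset.prod_const, Finset.card_erase_of_mem (Finset.mem_univ i)]
        simp
  calc lam / T ^ (n - 1) ≤ lam / P := by
        apply div_le_div_of_nonneg_left hlam.le hPpos hPle
  _ ≤ μ i := by
        rw [div_le_iff₀ hPpos]; nlinarith [hnn i]

lemma key1D (s : Set ℝ) (hconv : Convex ℝ s) {R C₁ K : ℝ}
    (hsub : s ⊆ Set.Ioo (-R) R) (hR : 0 < R) (hK : 0 ≤ K) (hC₁ : 0 ≤ C₁)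
    (φ ψ : ℝ → ℝ)
    (hder : ∀ t ∈ closure s, HasDerivAt φ (ψ t) t)
    (hcont : ContinuousOn ψ (closure s))
    (hφ : ∀ t ∈ closure s, |φ t| ≤ C₁)
    (hψ : ∀ t ∈ closure s, 0 ≤ ψ t + K) :
    ∫⁻ t in s, ENNReal.ofReal (ψ t + K) ≤ ENNReal.ofReal (2 * C₁ + 2 * R * K) := by
  rcases s.eq_empty_or_nonempty with rfl | hne
  · simp
  have hbdd : BddBelow s := ⟨-R, fun x hx => (hsub hx).1.le⟩
  have hbdd' : BddAbove s := ⟨R, fun x hx => (hsub hx).2.le⟩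
  set a := sInf s with ha
  set b := sSup s with hb
  have hab : a ≤ b := Real.sInf_le_sSup s hbdd hbdd'
  have hIccsub : Set.Icc a b ⊆ closure s := by
    have hac : a ∈ closure s := csInf_mem_closure hne hbdd
    have hbc : b ∈ closure s := csSup_mem_closure hne hbdd'
    have := (hconv.closure).segment_subset hac hbc
    rwa [segment_eq_Icc hab] at this
  have hsIcc : s ⊆ Set.Icc a b := fun x hx =>
    ⟨csInf_le hbdd hx, le_csSup hbdd' hx⟩
  have haR : -R ≤ a ∧ b ≤ R := by
    have h1 : closure s ⊆ Set.Icc (-R) R := by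
      have := closure_mono hsub
      rwa [closure_Ioo (by linarith : -R ≠ R)] at this
    obtain ⟨h2, h3⟩ := h1 (hIccsub ⟨le_refl a, hab⟩)
    obtain ⟨h4, h5⟩ := h1 (hIccsub ⟨hab, le_refl b⟩)
    exact ⟨h2, h5⟩
  have hcont' : ContinuousOn ψ (Set.Icc a b) := hcont.mono hIccsub
  have step1 : ∫⁻ t in s, ENNReal.ofReal (ψ t + K) ≤
      ∫⁻ t in Set.Icc a b, ENNReal.ofReal (ψ t + K) :=
    lintegral_mono_set hsIcc
  have hInt : IntegrableOn (fun t => ψ t + K) (Set.Icc a b) :=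
    ((hcont'.add continuousOn_const).integrableOn_compact isCompact_Icc)
  have step2 : ∫⁻ t in Set.Icc a b, ENNReal.ofReal (ψ t + K)
      = ENNReal.ofReal (∫ t in Set.Icc a b, (ψ t + K)) := by
    rw [← ofReal_integral_eq_lintegral_ofReal hInt]
    exact (ae_restrict_iff' measurableSet_Icc).2 (Filter.Eventually.of_forall
      fun t ht => hψ t (hIccsub ht))
  have hFTC : ∫ t in a..b, ψ t = φ b - φ a := by
    apply intervalIntegral.integral_eq_sub_of_hasDerivAt
    · intro t ht
      rw [Set.uIcc_of_le hab] at ht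
      exact hder t (hIccsub ht)
    · apply ContinuousOn.intervalIntegrable
      rwa [Set.uIcc_of_le hab]
  have hψInt : IntegrableOn ψ (Set.Icc a b) := hcont'.integrableOn_compact isCompact_Icc
  have hIccval : ∫ t in Set.Icc a b, (ψ t + K) ≤ 2 * C₁ + 2 * R * K := by
    have h1 : ∫ t in Set.Icc a b, (ψ t + K) = (∫ t in Set.Icc a b, ψ t) + K * (b - a) := by
      rw [integral_add hψInt (integrableOn_const measure_Icc_lt_top.ne)]
      congr 1
      rw [setIntegral_const, Measure.real, Real.volume_Icc, ENNReal.toReal_ofReal (by linarith)]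
      rw [smul_eq_mul, mul_comm]
    have h2 : ∫ t in Set.Icc a b, ψ t = φ b - φ a := by
      rw [integral_Icc_eq_integral_Ioc, ← intervalIntegral.integral_of_le hab, hFTC]
    have hφa := abs_le.1 (hφ a (hIccsub ⟨le_refl a, hab⟩))
    have hφb := abs_le.1 (hφ b (hIccsub ⟨hab, le_refl b⟩))
    have hba : b - a ≤ 2 * R := by linarith [haR.1, haR.2]
    rw [h1, h2]
    have : K * (b - a) ≤ K * (2 * R) := mul_le_mul_of_nonneg_left hba hK
    nlinarith
  calc _ ≤ _ := step1
  _ = _ := step2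
  _ ≤ _ := ENNReal.ofReal_le_ofReal hIccval

lemma mtw_cross {n : ℕ} (B : Fin n → Fin n → Fin n → Fin n → ℝ) (hmtw : MTWCondition B)
    (i : Fin n) (g : Fin n → ℝ) (C₁ C₂ : ℝ) (hC₂ : 0 ≤ C₂)
    (hg : ∀ k, |g k| ≤ C₁)
    (hB : ∀ k l, (k = i ∨ l = i) → |B i i k l| ≤ C₂) :
    -(2 * (n : ℝ) ^ 2 * C₂ * C₁ ^ 2) ≤ ∑ k, ∑ l, B i i k l * g k * g l := by
  classical
  have hC₁ : 0 ≤ C₁ := le_trans (abs_nonneg _) (hg i)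
  set η : Fin n → ℝ := fun k => if k = i then 0 else g k with hη
  set ξ : Fin n → ℝ := Pi.single i 1 with hξ
  have horth : (∑ k, ξ k * η k) = 0 := by
    rw [Finset.sum_eq_single i]
    · simp [hη]
    · intro b _ hb; simp [hξ, Pi.single_eq_of_ne hb]
    · simp
  have h0 := hmtw ξ η horth
  have hcollapse : (∑ i', ∑ j', ∑ k, ∑ l, B i' j' k l * ξ i' * ξ j' * η k * η l)
      = ∑ k, ∑ l, B i i k l * η k * η l := by
    rw [Finset.sum_eq_single i]
    · rw [Finset.sum_eq_single i]
      · simp [hξ, Pi.single_eq_same]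
      · intro b _ hb; simp [hξ, Pi.single_eq_of_ne hb]
      · simp
    · intro b _ hb
      apply Finset.sum_eq_zero; intro j' _
      apply Finset.sum_eq_zero; intro k _
      apply Finset.sum_eq_zero; intro l _
      simp [hξ, Pi.single_eq_of_ne hb]
    · simp
  rw [hcollapse] at h0
  -- error term
  have hterm : ∀ k l : Fin n,
      |B i i k l * g k * g l - B i i k l * η k * η l| ≤ 2 * C₂ * C₁ ^ 2 := by
    intro k l
    by_cases hk : k = i ∨ l = i
    · have hBkl := hB k l hk
      have h1 : |g k| ≤ C₁ := hg k
      have h2 : |g l| ≤ C₁ := hg l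
      have h3 : |η k| ≤ C₁ := by
        rw [hη]; dsimp only; split
        · simpa using hC₁
        · exact hg k
      have h4 : |η l| ≤ C₁ := by
        rw [hη]; dsimp only; split
        · simpa using hC₁
        · exact hg l
      calc |B i i k l * g k * g l - B i i k l * η k * η l|
          ≤ |B i i k l * g k * g l| + |B i i k l * η k * η l| := abs_sub _ _
        _ ≤ C₂ * C₁ ^ 2 + C₂ * C₁ ^ 2 := by
            rw [abs_mul, abs_mul, abs_mul, abs_mul]
            have n1 := abs_nonneg (B i i k l)
            have n2 := abs_nonneg (g k)
            have n3 := abs_nonneg (g l)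
            have n4 := abs_nonneg (η k)
            have n5 := abs_nonneg (η l)
            have e1 : |B i i k l| * |g k| * |g l| ≤ C₂ * C₁ ^ 2 := by
              calc |B i i k l| * |g k| * |g l| ≤ C₂ * C₁ * C₁ := by
                    apply mul_le_mul (mul_le_mul hBkl h1 n2 hC₂) h2 n3
                    positivity
                _ = C₂ * C₁ ^ 2 := by ring
            have e2 : |B i i k l| * |η k| * |η l| ≤ C₂ * C₁ ^ 2 := by
              calc |B i i k l| * |η k| * |η l| ≤ C₂ * C₁ * C₁ := by
                    apply mul_le_mul (mul_le_mul hBkl h3 n4 hC₂) h4 n5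
                    positivity
                _ = C₂ * C₁ ^ 2 := by ring
            linarith
        _ = 2 * C₂ * C₁ ^ 2 := by ring
    · push_neg at hk
      have : η k = g k := by rw [hη]; simp [hk.1]
      have h2 : η l = g l := by rw [hη]; simp [hk.2]
      rw [this, h2, sub_self, abs_zero]
      positivity
  have habs : |∑ k, ∑ l, (B i i k l * g k * g l - B i i k l * η k * η l)|
      ≤ (n : ℝ) * ((n : ℝ) * (2 * C₂ * C₁ ^ 2)) := by
    calc |∑ k, ∑ l, (B i i k l * g k * g l - B i i k l * η k * η l)|
        ≤ ∑ k, |∑ l, (B i i k l * g k * g l - B i i k l * η k * η l)| :=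
          Finset.abs_sum_le_sum_abs _ _
      _ ≤ ∑ k : Fin n, ((n : ℝ) * (2 * C₂ * C₁ ^ 2)) := by
          apply Finset.sum_le_sum; intro k _
          calc |∑ l, (B i i k l * g k * g l - B i i k l * η k * η l)|
              ≤ ∑ l, |B i i k l * g k * g l - B i i k l * η k * η l| :=
                Finset.abs_sum_le_sum_abs _ _
            _ ≤ ∑ l : Fin n, (2 * C₂ * C₁ ^ 2) := Finset.sum_le_sum fun l _ => hterm k l
            _ = (n : ℝ) * (2 * C₂ * C₁ ^ 2) := by simp [Finset.sum_const, nsmul_eq_mul]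
      _ = (n : ℝ) * ((n : ℝ) * (2 * C₂ * C₁ ^ 2)) := by simp [Finset.sum_const, nsmul_eq_mul]
  have hsplit : (∑ k, ∑ l, B i i k l * g k * g l)
      = (∑ k, ∑ l, B i i k l * η k * η l)
        + ∑ k, ∑ l, (B i i k l * g k * g l - B i i k l * η k * η l) := by
    rw [← Finset.sum_add_distrib]
    apply Finset.sum_congr rfl; intro k _
    rw [← Finset.sum_add_distrib]
    apply Finset.sum_congr rfl; intro l _
    ring
  rw [hsplit]
  have := (abs_le.1 habs).1
  nlinarith

lemma abs_coord_le {k : ℕ} (x : EuclideanSpace ℝ (Fin k)) (j : Fin k) : |x j| ≤ ‖x‖ := by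
  rw [EuclideanSpace.norm_eq]
  have h1 : |x j| = Real.sqrt (|x j| ^ 2) := (Real.sqrt_sq (abs_nonneg _)).symm
  rw [h1]
  apply Real.sqrt_le_sqrt
  exact Finset.single_le_sum (f := fun i => |x i| ^ 2) (fun i _ => sq_nonneg _) (Finset.mem_univ j)

lemma fubini_line {m : ℕ} (i : Fin (m + 1)) (F : EuclideanSpace ℝ (Fin (m + 1)) → ℝ≥0∞)
    (hF : Measurable F) :
    ∫⁻ q, F q = ∫⁻ y : Fin m → ℝ, ∫⁻ t : ℝ,
      F (((MeasurableEquiv.toLp 2 (Fin (m + 1) → ℝ)).symm).symm (i.insertNth t y)) := by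
  set eE := (MeasurableEquiv.toLp 2 (Fin (m + 1) → ℝ)).symm
  set eP := MeasurableEquiv.piFinSuccAbove (fun _ : Fin (m + 1) => ℝ) i
  have hEEs : MeasurePreserving eE.symm volume volume :=
    MeasurePreserving.symm eE (EuclideanSpace.volume_preserving_symm_measurableEquiv_toLp (Fin (m + 1)))
  have h1 : ∫⁻ q, F q = ∫⁻ x : Fin (m + 1) → ℝ, F (eE.symm x) :=
    hEEs.lintegral_map_equiv F eE.symm
  have hP : MeasurePreserving eP.symm
      ((volume : Measure ℝ).prod (Measure.pi fun _ => (volume : Measure ℝ)))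
      (Measure.pi fun _ => (volume : Measure ℝ)) :=
    MeasurePreserving.symm eP
      (measurePreserving_piFinSuccAbove (fun _ : Fin (m + 1) => (volume : Measure ℝ)) i)
  have h2 : ∫⁻ x : Fin (m + 1) → ℝ, F (eE.symm x)
      = ∫⁻ z : ℝ × (Fin m → ℝ), F (eE.symm (eP.symm z))
        ∂((volume : Measure ℝ).prod (Measure.pi fun _ => (volume : Measure ℝ))) := by
    rw [volume_pi]
    exact hP.lintegral_map_equiv (fun x => F (eE.symm x)) eP.symm
  have h3 : ∫⁻ z : ℝ × (Fin m → ℝ), F (eE.symm (eP.symm z))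
        ∂((volume : Measure ℝ).prod (Measure.pi fun _ => (volume : Measure ℝ)))
      = ∫⁻ y : Fin m → ℝ, ∫⁻ t : ℝ, F (eE.symm (eP.symm (t, y)))
        ∂(volume : Measure ℝ) ∂(Measure.pi fun _ => (volume : Measure ℝ)) := by
    apply lintegral_prod_symm
    exact ((hF.comp eE.symm.measurable).comp eP.symm.measurable).aemeasurable
  rw [h1, h2, h3, ← volume_pi]
  apply lintegral_congr; intro y
  apply lintegral_congr; intro t
  congr 1

lemma pt_affine {m : ℕ} (i : Fin (m + 1)) (y : Fin m → ℝ) (t : ℝ) :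
    ((MeasurableEquiv.toLp 2 (Fin (m + 1) → ℝ)).symm).symm (i.insertNth t y)
      = ((MeasurableEquiv.toLp 2 (Fin (m + 1) → ℝ)).symm).symm (i.insertNth 0 y)
        + t • EuclideanSpace.single i 1 := by
  apply PiLp.ext
  intro j
  have hcoord : ∀ x : Fin (m+1) → ℝ, (((MeasurableEquiv.toLp 2 (Fin (m+1) → ℝ)).symm).symm x : EuclideanSpace ℝ (Fin (m+1))) j = x j := fun _ => rfl
  rw [PiLp.add_apply, PiLp.smul_apply, hcoord, hcoord]
  by_cases hj : j = i
  · subst hj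
    simp [Fin.insertNth_apply_same, EuclideanSpace.single_apply]
  · obtain ⟨j', rfl⟩ := Fin.exists_succAbove_eq (show j ≠ i from hj)
    rw [Fin.insertNth_apply_succAbove, Fin.insertNth_apply_succAbove,
      EuclideanSpace.single_apply, if_neg (Fin.succAbove_ne i j')]
    try simp

lemma le_on_closure' {E : Type*} [TopologicalSpace E] {f : E → ℝ} {Q U : Set E} {c : ℝ}
    (hU : IsOpen U) (hQU : closure Q ⊆ U) (hf : ContinuousOn f U)
    (hb : ∀ q ∈ Q, f q ≤ c) : ∀ q ∈ closure Q, f q ≤ c := by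
  intro q hq
  have hne : (nhdsWithin q Q).NeBot := mem_closure_iff_nhdsWithin_neBot.1 hq
  have hca : ContinuousAt f q := hf.continuousAt (hU.mem_nhds (hQU hq))
  have htend : Filter.Tendsto f (nhdsWithin q Q) (nhds (f q)) :=
    hca.continuousWithinAt.tendsto
  exact le_of_tendsto htend (eventually_mem_nhdsWithin.mono fun x hx => hb x hx)

lemma slice_integral_bound {m : ℕ} {Q U : Set (EuclideanSpace ℝ (Fin (m + 1)))}
    (hQopen : IsOpen Q) (hQconv : Convex ℝ Q)
    (hQsub : Q ⊆ Metric.ball 0 ((m : ℝ) + 1))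
    (hUopen : IsOpen U) (hclQU : closure Q ⊆ U)
    {w : EuclideanSpace ℝ (Fin (m + 1)) → ℝ} (hw : ContDiffOn ℝ 2 w U)
    {C₁ K : ℝ} (hC₁ : 0 ≤ C₁) (hK : 0 ≤ K)
    (hgradcl : ∀ q ∈ closure Q, ‖fderiv ℝ w q‖ ≤ C₁)
    (i : Fin (m + 1))
    (hpos : ∀ q ∈ closure Q,
      0 ≤ fderiv ℝ (fun x => fderiv ℝ w x (EuclideanSpace.single i 1)) q
            (EuclideanSpace.single i 1) + K) :
    ∫⁻ q in Q, ENNReal.ofReal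
        (fderiv ℝ (fun x => fderiv ℝ w x (EuclideanSpace.single i 1)) q
          (EuclideanSpace.single i 1) + K)
      ≤ ENNReal.ofReal ((2 * C₁ + 2 * ((m : ℝ) + 1) * K) * (2 * ((m : ℝ) + 1)) ^ m) := by
  classical
  set nR : ℝ := (m : ℝ) + 1 with hnR
  have hnR0 : 0 < nR := by positivity
  set e1 : EuclideanSpace ℝ (Fin (m + 1)) := EuclideanSpace.single i 1 with he1
  set g : EuclideanSpace ℝ (Fin (m + 1)) → ℝ :=
    fun q => fderiv ℝ (fun x => fderiv ℝ w x e1) q e1 with hgdef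
  set B0 : ℝ := 2 * C₁ + 2 * nR * K with hB0
  have hB00 : 0 ≤ B0 := by positivity
  -- basic differentiability facts
  have hQU : Q ⊆ U := subset_closure.trans hclQU
  have hd1 : ContDiffOn ℝ 1 (fderiv ℝ w) U := hw.fderiv_of_isOpen hUopen (by norm_num)
  have hd1' : DifferentiableOn ℝ (fderiv ℝ w) U := hd1.differentiableOn (by norm_num)
  have hF2cont : ContinuousOn (fderiv ℝ (fderiv ℝ w)) U :=
    hd1.continuousOn_fderiv_of_isOpen hUopen (by norm_num)
  have hfd : ∀ q ∈ U, HasFDerivAt (fun x => fderiv ℝ w x e1)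
      ((ContinuousLinearMap.apply ℝ ℝ e1).comp (fderiv ℝ (fderiv ℝ w) q)) q := by
    intro q hq
    exact (ContinuousLinearMap.apply ℝ ℝ e1).hasFDerivAt.comp q
      ((hd1'.differentiableAt (hUopen.mem_nhds hq)).hasFDerivAt)
  have hgid : ∀ q ∈ U, g q = fderiv ℝ (fderiv ℝ w) q e1 e1 := by
    intro q hq
    rw [hgdef]
    dsimp only
    rw [(hfd q hq).fderiv]
    rfl
  have hgcont : ContinuousOn g U := by
    have h : ContinuousOn (fun q => fderiv ℝ (fderiv ℝ w) q e1 e1) U :=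
      (hF2cont.clm_apply continuousOn_const).clm_apply continuousOn_const
    exact h.congr hgid
  have hgmeas : Measurable g :=
    measurable_fderiv_apply_const ℝ (fun x => fderiv ℝ w x e1) e1
  -- indicator setup
  set f : EuclideanSpace ℝ (Fin (m + 1)) → ℝ≥0∞ := fun q => ENNReal.ofReal (g q + K) with hf
  set F := Q.indicator f with hF
  have hFmeas : Measurable F :=
    ((hgmeas.add_const K).ennreal_ofReal).indicator hQopen.measurableSet
  rw [← lintegral_indicator hQopen.measurableSet]
  rw [fubini_line i F hFmeas]
  -- the slice map
  set Pt : (Fin m → ℝ) → ℝ → EuclideanSpace ℝ (Fin (m + 1)) :=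
    fun y t => ((MeasurableEquiv.toLp 2 (Fin (m + 1) → ℝ)).symm).symm (i.insertNth t y) with hPtdef
  have hPt : ∀ y t, Pt y t = Pt y 0 + t • e1 := fun y t => pt_affine i y t
  have hPtcont : ∀ y, Continuous (Pt y) := by
    intro y
    rw [show Pt y = fun t => Pt y 0 + t • e1 from funext (hPt y)]
    exact continuous_const.add (continuous_id.smul continuous_const)
  have hPti : ∀ y t, Pt y t i = t := by
    intro y t
    have hrfl : Pt y t i = (i.insertNth t y : ∀ _ : Fin (m + 1), ℝ) i := rfl
    rw [hrfl, Fin.insertNth_apply_same]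
  have hPtj : ∀ y t j', Pt y t (i.succAbove j') = y j' := by
    intro y t j'
    have hrfl : Pt y t (i.succAbove j') = (i.insertNth t y : ∀ _ : Fin (m + 1), ℝ) (i.succAbove j') := rfl
    rw [hrfl, Fin.insertNth_apply_succAbove]
  set box : Set (Fin m → ℝ) := Set.univ.pi fun _ => Set.Ioo (-nR) nR with hbox
  have key : ∀ y, (∫⁻ t : ℝ, F (Pt y t))
      ≤ box.indicator (fun _ => ENNReal.ofReal B0) y := by
    intro y
    by_cases hy : y ∈ box
    · rw [Set.indicator_of_mem hy]
      set s : Set ℝ := Pt y ⁻¹' Q with hs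
      have hsmeas : MeasurableSet s := (hQopen.preimage (hPtcont y)).measurableSet
      have heq : (∫⁻ t : ℝ, F (Pt y t)) = ∫⁻ t in s, ENNReal.ofReal (g (Pt y t) + K) := by
        rw [← lintegral_indicator hsmeas]
        apply lintegral_congr
        intro t
        by_cases ht : t ∈ s
        · rw [Set.indicator_of_mem ht, hF, Set.indicator_of_mem (by exact ht)]
        · rw [Set.indicator_of_notMem ht, hF, Set.indicator_of_notMem (by exact ht)]
      rw [heq]
      have hclos : ∀ t ∈ closure s, Pt y t ∈ closure Q := fun t ht =>
        (hPtcont y).closure_preimage_subset Q ht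
      have hclosU : ∀ t ∈ closure s, Pt y t ∈ U := fun t ht => hclQU (hclos t ht)
      -- convexity of the slice
      have hsconv : Convex ℝ s := by
        intro t1 ht1 t2 ht2 a b ha hb hab
        have hcomb : Pt y (a • t1 + b • t2) = a • Pt y t1 + b • Pt y t2 := by
          rw [hPt y (a • t1 + b • t2), hPt y t1, hPt y t2]
          match_scalars
          · linarith
          · simp only [smul_eq_mul]; ring
        show Pt y (a • t1 + b • t2) ∈ Q
        rw [hcomb]
        exact hQconv ht1 ht2 ha hb hab
      -- slice inside (-nR, nR)
      have hssub : s ⊆ Set.Ioo (-nR) nR := by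
        intro t ht
        have hQt : Pt y t ∈ Q := ht
        have hball := hQsub hQt
        rw [Metric.mem_ball, dist_zero_right] at hball
        have := abs_coord_le (Pt y t) i
        rw [hPti y t] at this
        have habs : |t| < nR := lt_of_le_of_lt this hball
        exact abs_lt.1 habs |>.imp (fun h => h) (fun h => h) |> fun h => ⟨h.1, h.2⟩
      -- apply the 1D lemma
      apply key1D s hsconv hssub hnR0 hK hC₁
        (fun t => fderiv ℝ w (Pt y t) e1) (fun t => g (Pt y t))
      · intro t ht
        have hU' := hclosU t ht
        have h1 := hfd (Pt y t) hU'
        have h2 : HasDerivAt (Pt y) e1 t := by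
          have h := ((hasDerivAt_id t).smul_const e1).const_add (Pt y 0)
          rw [one_smul] at h
          rw [show Pt y = fun u => Pt y 0 + u • e1 from funext (hPt y)]
          exact h
        have h3 := h1.comp_hasDerivAt t h2
        have : g (Pt y t) = ((ContinuousLinearMap.apply ℝ ℝ e1).comp
            (fderiv ℝ (fderiv ℝ w) (Pt y t))) e1 := by
          rw [hgdef]
          dsimp only
          rw [(hfd (Pt y t) hU').fderiv]
        rw [this]
        exact h3
      · exact hgcont.comp (hPtcont y).continuousOn hclosU
      · intro t ht
        have h := hgradcl (Pt y t) (hclos t ht)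
        calc |fderiv ℝ w (Pt y t) e1| = ‖fderiv ℝ w (Pt y t) e1‖ := (Real.norm_eq_abs _).symm
          _ ≤ ‖fderiv ℝ w (Pt y t)‖ * ‖e1‖ := (fderiv ℝ w (Pt y t)).le_opNorm e1
          _ ≤ C₁ * 1 := by
              apply mul_le_mul h _ (norm_nonneg _) hC₁
              rw [he1, EuclideanSpace.norm_single, norm_one]
          _ = C₁ := mul_one C₁
      · exact fun t ht => hpos (Pt y t) (hclos t ht)
    · rw [Set.indicator_of_notMem hy]
      have hempty : ∀ t, Pt y t ∉ Q := by
        intro t hQt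
        apply hy
        intro j' _
        have hball := hQsub hQt
        rw [Metric.mem_ball, dist_zero_right] at hball
        have := abs_coord_le (Pt y t) (i.succAbove j')
        rw [hPtj y t j'] at this
        have habs : |y j'| < nR := lt_of_le_of_lt this hball
        exact abs_lt.1 habs
      have : ∀ t, F (Pt y t) = 0 := fun t => Set.indicator_of_notMem (hempty t) f
      simp only [this, lintegral_zero, le_refl]
  calc (∫⁻ y, ∫⁻ t : ℝ, F (Pt y t))
      ≤ ∫⁻ y, box.indicator (fun _ => ENNReal.ofReal B0) y := lintegral_mono key
    _ = ENNReal.ofReal B0 * volume box := by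
        rw [lintegral_indicator_const (MeasurableSet.univ_pi fun _ => measurableSet_Ioo)]
    _ = ENNReal.ofReal (B0 * (2 * nR) ^ m) := by
        rw [hbox, volume_pi_pi]
        simp only [Real.volume_Ioo]
        rw [show nR - -nR = 2 * nR by ring]
        rw [Finset.prod_const, Finset.card_univ, Fintype.card_fin]
        rw [← ENNReal.ofReal_pow (by positivity), ← ENNReal.ofReal_mul hB00]

end Aux

set_option maxHeartbeats 1000000 in
/-- abstract form of Lemma 3.3. With the notation of the `L¹` bound
(normalized convex set `Q`, `C²` function `w` with bounded gradient, measurable MTW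
coefficients `𝒞`), if moreover `λ ≤ det M ≤ 1/λ` on `Q` and `Q' ⊆ Q` has measure at
least `δ`, then the set of points of `Q'` where `(1/C)·Id ≤ M ≤ C·Id` has measure at
least `1/C`, with `C ≥ 1` depending only on `n`, `C₁`, `C₂`, `λ`, `δ`. -/
theorem good_matrix_set_lower_bound {n : ℕ} (hn : 1 ≤ n)
    (C₁ C₂ lam δ : ℝ) (hC₁ : 0 < C₁) (hC₂ : 0 < C₂)
    (hlam0 : 0 < lam) (hlam1 : lam ≤ 1) (hδ : 0 < δ) :
    ∃ C : ℝ, 1 ≤ C ∧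
    ∀ (Q : Set (EuclideanSpace ℝ (Fin n))), IsOpen Q → Convex ℝ Q →
      Metric.ball (0 : EuclideanSpace ℝ (Fin n)) 1 ⊆ Q →
      Q ⊆ Metric.ball (0 : EuclideanSpace ℝ (Fin n)) n →
    ∀ (w : EuclideanSpace ℝ (Fin n) → ℝ) (U : Set (EuclideanSpace ℝ (Fin n))),
      IsOpen U → closure Q ⊆ U → ContDiffOn ℝ 2 w U →
      (∀ q ∈ Q, ‖fderiv ℝ w q‖ ≤ C₁) →
    ∀ (𝒞 : EuclideanSpace ℝ (Fin n) → Fin n → Fin n → Fin n → Fin n → ℝ),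
      (∀ i j k l, Measurable fun q => 𝒞 q i j k l) →
      (∀ q ∈ Q, ∀ i j k l, 𝒞 q i j k l = 𝒞 q j i k l) →
      (∀ q ∈ Q, MTWCondition (𝒞 q)) →
      (∀ q ∈ Q, ∀ i k l : Fin n, (k = i ∨ l = i) → |𝒞 q i i k l| ≤ C₂) →
    ∀ (M : EuclideanSpace ℝ (Fin n) → Matrix (Fin n) (Fin n) ℝ),
      (∀ q i j, M q i j =
        iteratedFDeriv ℝ 2 w q ![EuclideanSpace.single i 1, EuclideanSpace.single j 1]
          - ∑ k, ∑ l, 𝒞 q i j k l * fderiv ℝ w q (EuclideanSpace.single k 1)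
              * fderiv ℝ w q (EuclideanSpace.single l 1)) →
      (∀ q ∈ Q, (M q).PosSemidef) →
      (∀ q ∈ Q, lam ≤ (M q).det ∧ (M q).det ≤ 1 / lam) →
    ∀ (Q' : Set (EuclideanSpace ℝ (Fin n))), MeasurableSet Q' → Q' ⊆ Q →
      ENNReal.ofReal δ ≤ volume Q' →
      ENNReal.ofReal (1 / C) ≤
        volume {q ∈ Q' | (M q - C⁻¹ • (1 : Matrix (Fin n) (Fin n) ℝ)).PosSemidef ∧
          (C • (1 : Matrix (Fin n) (Fin n) ℝ) - M q).PosSemidef} := by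
  classical
  obtain ⟨m, rfl⟩ : ∃ m, n = m + 1 := ⟨n - 1, (Nat.succ_pred_eq_of_pos hn).symm⟩
  set nR : ℝ := (m : ℝ) + 1 with hnRdef
  have hnR0 : 0 < nR := by positivity
  set K : ℝ := 2 * nR ^ 2 * C₂ * C₁ ^ 2 with hKdef
  have hK0 : 0 ≤ K := by positivity
  set B0 : ℝ := 2 * C₁ + 2 * nR * K with hB0def
  have hB00 : 0 ≤ B0 := by positivity
  set A : ℝ := nR * (B0 * (2 * nR) ^ m) with hAdef
  have hA0 : 0 ≤ A := by positivity
  set T : ℝ := 2 * A / δ + 1 with hTdef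
  have hT1 : 1 ≤ T := by
    have h : 0 ≤ 2 * A / δ := by positivity
    rw [hTdef]
    linarith
  have hT0 : 0 < T := lt_of_lt_of_le one_pos hT1
  set c : ℝ := lam / T ^ m with hcdef
  have hc0 : 0 < c := by positivity
  set C : ℝ := max (max T (T ^ m / lam)) (max (2 / δ) 1) with hCdef
  have hC1 : 1 ≤ C := le_trans (le_max_right _ _) (le_max_right _ _)
  have hC0 : 0 < C := lt_of_lt_of_le one_pos hC1
  refine ⟨C, hC1, ?_⟩
  intro Q hQopen hQconv hQball hQsub w U hUopen hclQU hw hgrad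
    𝒞 h𝒞meas h𝒞symm h𝒞mtw h𝒞bd M hMdef hMpsd hMdet Q' hQ'meas hQ'sub hQ'vol
  have hQU : Q ⊆ U := subset_closure.trans hclQU
  have hQ'U : Q' ⊆ U := hQ'sub.trans hQU
  -- notation
  set e : Fin (m + 1) → EuclideanSpace ℝ (Fin (m + 1)) :=
    fun i => EuclideanSpace.single i 1 with hedef
  set g : Fin (m + 1) → EuclideanSpace ℝ (Fin (m + 1)) → ℝ :=
    fun i q => fderiv ℝ (fun x => fderiv ℝ w x (e i)) q (e i) with hgdef
  have hgmeas : ∀ i, Measurable (g i) := fun i =>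
    measurable_fderiv_apply_const ℝ (fun x => fderiv ℝ w x (e i)) (e i)
  -- differentiability facts
  have hd1 : ContDiffOn ℝ 1 (fderiv ℝ w) U := hw.fderiv_of_isOpen hUopen (by norm_num)
  have hd1' : DifferentiableOn ℝ (fderiv ℝ w) U := hd1.differentiableOn (by norm_num)
  have hF2cont : ContinuousOn (fderiv ℝ (fderiv ℝ w)) U :=
    hd1.continuousOn_fderiv_of_isOpen hUopen (by norm_num)
  have hfd : ∀ (i : Fin (m+1)), ∀ q ∈ U, HasFDerivAt (fun x => fderiv ℝ w x (e i))
      ((ContinuousLinearMap.apply ℝ ℝ (e i)).comp (fderiv ℝ (fderiv ℝ w) q)) q := by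
    intro i q hq
    exact (ContinuousLinearMap.apply ℝ ℝ (e i)).hasFDerivAt.comp q
      ((hd1'.differentiableAt (hUopen.mem_nhds hq)).hasFDerivAt)
  have hgid : ∀ (i : Fin (m+1)), ∀ q ∈ U, g i q = fderiv ℝ (fderiv ℝ w) q (e i) (e i) := by
    intro i q hq
    rw [hgdef]
    dsimp only
    rw [(hfd i q hq).fderiv]
    rfl
  have hgiter : ∀ (i : Fin (m+1)), ∀ q ∈ U,
      g i q = iteratedFDeriv ℝ 2 w q ![e i, e i] := by
    intro i q hq
    rw [iteratedFDeriv_two_apply, hgid i q hq]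
    simp
  have hgcont : ∀ i, ContinuousOn (g i) U := by
    intro i
    have h : ContinuousOn (fun q => fderiv ℝ (fderiv ℝ w) q (e i) (e i)) U :=
      (hF2cont.clm_apply continuousOn_const).clm_apply continuousOn_const
    exact h.congr (hgid i)
  -- gradient bound on closure
  have hgradcl : ∀ q ∈ closure Q, ‖fderiv ℝ w q‖ ≤ C₁ :=
    le_on_closure' hUopen hclQU
      (hw.continuousOn_fderiv_of_isOpen hUopen (by norm_num)).norm hgrad
  have hgradk : ∀ q ∈ closure Q, ∀ k, |fderiv ℝ w q (e k)| ≤ C₁ := by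
    intro q hq k
    calc |fderiv ℝ w q (e k)| = ‖fderiv ℝ w q (e k)‖ := (Real.norm_eq_abs _).symm
      _ ≤ ‖fderiv ℝ w q‖ * ‖e k‖ := (fderiv ℝ w q).le_opNorm _
      _ ≤ C₁ * 1 := by
          apply mul_le_mul (hgradcl q hq) _ (norm_nonneg _) hC₁.le
          rw [hedef]
          simp [EuclideanSpace.norm_single]
      _ = C₁ := mul_one C₁
  -- pointwise: cross term lower bound
  have hSlb : ∀ q ∈ Q, ∀ i, -K ≤ ∑ k, ∑ l,
      𝒞 q i i k l * fderiv ℝ w q (e k) * fderiv ℝ w q (e l) := by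
    intro q hq i
    have h := mtw_cross (𝒞 q) (h𝒞mtw q hq) i (fun k => fderiv ℝ w q (e k)) C₁ C₂ hC₂.le
      (fun k => hgradk q (subset_closure hq) k) (fun k l hkl => h𝒞bd q hq i k l hkl)
    have hKeq : 2 * ((m + 1 : ℕ) : ℝ) ^ 2 * C₂ * C₁ ^ 2 = K := by
      rw [hKdef, hnRdef]; push_cast; ring
    rw [hKeq] at h
    exact h
  -- diagonal entries of M are nonnegative
  have hMdiag : ∀ q ∈ Q, ∀ i, 0 ≤ M q i i := by
    intro q hq i
    have h := (hMpsd q hq).2 (Finsupp.single i 1)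
    simpa [Finsupp.sum_single_index, Matrix.mulVec_single, dotProduct, Pi.single_apply, Finset.sum_ite_eq,
      mul_ite, ite_mul] using h
  -- key diagonal inequality on Q
  have hdiagkey : ∀ q ∈ Q, ∀ i, M q i i ≤ g i q + K ∧ 0 ≤ g i q + K := by
    intro q hq i
    have hmd := hMdef q i i
    have hgq : g i q = iteratedFDeriv ℝ 2 w q ![e i, e i] := hgiter i q (hQU hq)
    have key : M q i i = g i q - ∑ k, ∑ l,
        𝒞 q i i k l * fderiv ℝ w q (e k) * fderiv ℝ w q (e l) := by
      rw [hmd, hgq]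
    have hS := hSlb q hq i
    have h0 := hMdiag q hq i
    constructor
    · rw [key]; linarith
    · rw [key] at h0; linarith
  -- L¹ bound on trace
  have hIbound : ∫⁻ q in Q, ENNReal.ofReal ((M q).trace) ≤ ENNReal.ofReal A := by
    have hmono : ∫⁻ q in Q, ENNReal.ofReal ((M q).trace)
        ≤ ∫⁻ q in Q, ∑ i, ENNReal.ofReal (g i q + K) := by
      apply lintegral_mono_ae
      rw [ae_restrict_iff' hQopen.measurableSet]
      apply Filter.Eventually.of_forall
      intro q hq
      have htr : (M q).trace ≤ ∑ i, (g i q + K) := by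
        rw [Matrix.trace]
        apply Finset.sum_le_sum
        intro i _
        exact (hdiagkey q hq i).1
      calc ENNReal.ofReal ((M q).trace) ≤ ENNReal.ofReal (∑ i, (g i q + K)) :=
            ENNReal.ofReal_le_ofReal htr
        _ = ∑ i, ENNReal.ofReal (g i q + K) :=
            ENNReal.ofReal_sum_of_nonneg fun i _ => (hdiagkey q hq i).2
    have hsum : ∫⁻ q in Q, ∑ i, ENNReal.ofReal (g i q + K)
        = ∑ i, ∫⁻ q in Q, ENNReal.ofReal (g i q + K) := by
      apply lintegral_finset_sum
      intro i _
      exact ((hgmeas i).add_const K).ennreal_ofReal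
    have hposcl : ∀ i : Fin (m+1), ∀ q ∈ closure Q, 0 ≤ g i q + K := by
      intro i q hq
      have h := le_on_closure' (f := fun q => -(g i q) - K) (c := 0) hUopen hclQU
        (((hgcont i).neg).sub continuousOn_const)
        (fun q hq => by
          have h2 := (hdiagkey q hq i).2
          show -(g i q) - K ≤ 0
          linarith) q hq
      have h' : -(g i q) - K ≤ 0 := h
      linarith
    have heach : ∀ i : Fin (m+1), ∫⁻ q in Q, ENNReal.ofReal (g i q + K)
        ≤ ENNReal.ofReal (B0 * (2 * nR) ^ m) := by
      intro i
      have hball : Q ⊆ Metric.ball 0 ((m : ℝ) + 1) := by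
        intro x hx
        have := hQsub hx
        simpa using this
      have hposcl' : ∀ q ∈ closure Q,
          0 ≤ fderiv ℝ (fun x => fderiv ℝ w x (EuclideanSpace.single i 1)) q
              (EuclideanSpace.single i 1) + K := fun q hq => hposcl i q hq
      have hsl := slice_integral_bound hQopen hQconv hball hUopen hclQU hw hC₁.le hK0
        hgradcl i hposcl'
      calc ∫⁻ q in Q, ENNReal.ofReal (g i q + K)
          = ∫⁻ q in Q, ENNReal.ofReal
              (fderiv ℝ (fun x => fderiv ℝ w x (EuclideanSpace.single i 1)) q
                (EuclideanSpace.single i 1) + K) := rfl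
        _ ≤ ENNReal.ofReal ((2 * C₁ + 2 * ((m : ℝ) + 1) * K) * (2 * ((m : ℝ) + 1)) ^ m) := hsl
        _ = ENNReal.ofReal (B0 * (2 * nR) ^ m) := by rw [hB0def, hnRdef]
    calc ∫⁻ q in Q, ENNReal.ofReal ((M q).trace)
        ≤ ∑ i, ∫⁻ q in Q, ENNReal.ofReal (g i q + K) := hmono.trans (le_of_eq hsum)
      _ ≤ ∑ _i : Fin (m+1), ENNReal.ofReal (B0 * (2 * nR) ^ m) :=
          Finset.sum_le_sum fun i _ => heach i
      _ = ENNReal.ofReal A := by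
          rw [Finset.sum_const, Finset.card_univ, Fintype.card_fin, hAdef]
          rw [nsmul_eq_mul, ENNReal.ofReal_mul hnR0.le]
          congr 1
          rw [hnRdef, show ((m : ℝ) + 1) = ((m + 1 : ℕ) : ℝ) by push_cast; ring,
            ENNReal.ofReal_natCast]
  -- Chebyshev and conclusion
  set tr : EuclideanSpace ℝ (Fin (m + 1)) → ℝ≥0∞ := fun q => ENNReal.ofReal ((M q).trace)
    with htrdef
  have htrmeas : Measurable tr := by
    apply Measurable.ennreal_ofReal
    have heqtr : (fun q => (M q).trace) = fun q => ∑ i,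
        (iteratedFDeriv ℝ 2 w q ![EuclideanSpace.single i 1, EuclideanSpace.single i 1]
          - ∑ k, ∑ l, 𝒞 q i i k l * fderiv ℝ w q (EuclideanSpace.single k 1)
              * fderiv ℝ w q (EuclideanSpace.single l 1)) := by
      funext q
      simp only [Matrix.trace, Matrix.diag]
      exact Finset.sum_congr rfl fun i _ => hMdef q i i
    rw [heqtr]
    apply Finset.measurable_sum
    intro i _
    apply Measurable.sub
    · have hiter : (fun q => iteratedFDeriv ℝ 2 w q
          ![EuclideanSpace.single i 1, EuclideanSpace.single i 1])
          = fun q => fderiv ℝ (fderiv ℝ w) q (EuclideanSpace.single i 1)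
              (EuclideanSpace.single i 1) := by
        funext q
        rw [iteratedFDeriv_two_apply]
        simp
      rw [hiter]
      exact (ContinuousLinearMap.measurable_apply (EuclideanSpace.single i 1)).comp
        (measurable_fderiv_apply_const ℝ (fderiv ℝ w) (EuclideanSpace.single i 1))
    · apply Finset.measurable_sum
      intro k _
      apply Finset.measurable_sum
      intro l _
      exact ((h𝒞meas i i k l).mul
        (measurable_fderiv_apply_const ℝ w (EuclideanSpace.single k 1))).mul
        (measurable_fderiv_apply_const ℝ w (EuclideanSpace.single l 1))
  have cheb := mul_meas_ge_le_lintegral₀ (μ := volume.restrict Q')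
    htrmeas.aemeasurable (ENNReal.ofReal T)
  have hrle : (∫⁻ q, tr q ∂(volume.restrict Q')) ≤ ENNReal.ofReal A :=
    le_trans (lintegral_mono_set hQ'sub) hIbound
  set bad : Set (EuclideanSpace ℝ (Fin (m + 1))) := {q | ENNReal.ofReal T ≤ tr q} with hbaddef
  have hbadvol : volume (bad ∩ Q') ≤ ENNReal.ofReal (δ / 2) := by
    have h1 : ENNReal.ofReal T * volume (bad ∩ Q') ≤ ENNReal.ofReal A := by
      rw [← Measure.restrict_apply' hQ'meas]
      exact le_trans cheb hrle
    have hAT : A ≤ T * (δ / 2) := by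
      rw [hTdef]
      rw [div_add' _ _ _ (ne_of_gt hδ), div_mul_eq_mul_div, le_div_iff₀ hδ]
      nlinarith
    have h2 : ENNReal.ofReal A ≤ ENNReal.ofReal T * ENNReal.ofReal (δ / 2) := by
      rw [← ENNReal.ofReal_mul hT0.le]
      exact ENNReal.ofReal_le_ofReal hAT
    have h3 := le_trans h1 h2
    have hne0 : ENNReal.ofReal T ≠ 0 := ne_of_gt (ENNReal.ofReal_pos.2 hT0)
    exact (ENNReal.mul_le_mul_iff_right hne0 ENNReal.ofReal_ne_top).1 h3
  have hsubset : Q' ⊆ {q ∈ Q' | (M q - C⁻¹ • (1 : Matrix (Fin (m + 1)) (Fin (m + 1)) ℝ)).PosSemidef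
      ∧ (C • (1 : Matrix (Fin (m + 1)) (Fin (m + 1)) ℝ) - M q).PosSemidef} ∪ (bad ∩ Q') := by
    intro q hq
    by_cases hb : q ∈ bad
    · exact Or.inr ⟨hb, hq⟩
    · left
      refine ⟨hq, ?_⟩
      have hqQ := hQ'sub hq
      have htrT : (M q).trace ≤ T := by
        by_contra hcon
        push_neg at hcon
        exact hb (ENNReal.ofReal_le_ofReal hcon.le)
      have hpsd := hMpsd q hqQ
      have hdet := (hMdet q hqQ).1
      have heig := eig_bounds (M q) hpsd T lam hT0 hlam0 htrT hdet
      have hsand := eig_sandwich (M q) hpsd c T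
        (fun i => by
          have h := (heig i).1
          rw [show (m + 1) - 1 = m from rfl] at h
          rw [hcdef]
          exact h)
        (fun i => (heig i).2)
      constructor
      · have hCge : T ^ m / lam ≤ C := le_trans (le_max_right _ _) (le_max_left _ _)
        have hTm : (0 : ℝ) < T ^ m := by positivity
        have hcC : C⁻¹ ≤ c := by
          rw [hcdef, le_div_iff₀ hTm, inv_mul_le_iff₀ hC0]
          rw [div_le_iff₀ hlam0] at hCge
          linarith
        have hdecomp : M q - C⁻¹ • (1 : Matrix (Fin (m + 1)) (Fin (m + 1)) ℝ)
            = (M q - c • 1) + ((c - C⁻¹) • 1) := by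
          rw [sub_smul]
          abel
        rw [hdecomp]
        exact hsand.1.add (psd_smul_one (by linarith))
      · have hTC : T ≤ C := le_trans (le_max_left _ _) (le_max_left _ _)
        have hdecomp : C • (1 : Matrix (Fin (m + 1)) (Fin (m + 1)) ℝ) - M q
            = (T • 1 - M q) + ((C - T) • 1) := by
          rw [sub_smul]
          abel
        rw [hdecomp]
        exact hsand.2.add (psd_smul_one (by linarith))
  have hvol : volume Q' ≤ volume {q ∈ Q' | (M q - C⁻¹ • (1 : Matrix (Fin (m + 1)) (Fin (m + 1)) ℝ)).PosSemidef
      ∧ (C • (1 : Matrix (Fin (m + 1)) (Fin (m + 1)) ℝ) - M q).PosSemidef} + volume (bad ∩ Q') :=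
    le_trans (measure_mono hsubset) (measure_union_le _ _)
  have h1 : ENNReal.ofReal δ - ENNReal.ofReal (δ / 2)
      ≤ volume {q ∈ Q' | (M q - C⁻¹ • (1 : Matrix (Fin (m + 1)) (Fin (m + 1)) ℝ)).PosSemidef
        ∧ (C • (1 : Matrix (Fin (m + 1)) (Fin (m + 1)) ℝ) - M q).PosSemidef} := by
    apply tsub_le_iff_right.2
    calc ENNReal.ofReal δ ≤ volume Q' := hQ'vol
      _ ≤ _ + volume (bad ∩ Q') := hvol
      _ ≤ _ + ENNReal.ofReal (δ / 2) := add_le_add le_rfl hbadvol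
  have h2 : ENNReal.ofReal δ - ENNReal.ofReal (δ / 2) = ENNReal.ofReal (δ / 2) := by
    rw [← ENNReal.ofReal_sub _ (by linarith)]
    congr 1
    ring
  have h3 : ENNReal.ofReal (1 / C) ≤ ENNReal.ofReal (δ / 2) := by
    apply ENNReal.ofReal_le_ofReal
    have hC2δ : 2 / δ ≤ C := le_trans (le_max_left _ _) (le_max_right _ _)
    rw [div_le_div_iff₀ hC0 (by norm_num : (0:ℝ) < 2)]
    rw [div_le_iff₀ hδ] at hC2δ
    nlinarith
  calc ENNReal.ofReal (1 / C) ≤ ENNReal.ofReal (δ / 2) := h3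
    _ = ENNReal.ofReal δ - ENNReal.ofReal (δ / 2) := h2.symm
    _ ≤ _ := h1
end

section
/- Let n ≥ 1 and σ ∈ (0,1). Suppose that for every x ∈ ℝⁿ and every h > 0 we are given an open set S(x,h) ⊆ ℝⁿ such that: (i) x ∈ S(x,h); (ii) S(x,h) ⊆ S(x,h') whenever 0 < h ≤ h'; (iii) (engulfing) for all x, y ∈ ℝⁿ and h > 0, if S(x,h) ∩ S(y,h) ≠ ∅ then S(y,h) ⊆ S(x, h/σ). Let D ⊆ ℝⁿ be a compact set and let h : D → (0,∞) be a function with sup_{x∈D} h(x) < ∞. Then there exist finitely many points x₁, …, x_m ∈ D such that D ⊆ ⋃_{i=1}^m S(x_i, h(x_i)) and the sets S(x_i, σ h(x_i)/2), i = 1, …, m, are pairwise disjoint. -/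
open Classical in
/-- Greedy selection lemma: from any finite family of points, one can select a
subfamily whose small sections are pairwise disjoint and whose big sections cover
all the small sections of the original family. -/
lemma vitali_aux_sections {α : Type*} (σ : ℝ) (hσ0 : 0 < σ)
    (S : α → ℝ → Set α)
    (hmem : ∀ x (h : ℝ), 0 < h → x ∈ S x h)
    (hmono : ∀ x (h h' : ℝ), 0 < h → h ≤ h' → S x h ⊆ S x h')
    (heng : ∀ x y (h : ℝ), 0 < h → (S x h ∩ S y h).Nonempty → S y h ⊆ S x (h / σ))
    (h : α → ℝ) (D : Set α) (hh : ∀ x ∈ D, 0 < h x) :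
    ∀ T : Finset α, (∀ y ∈ T, y ∈ D) →
      ∃ P : Finset α, (∀ p ∈ P, p ∈ T) ∧
        (∀ a ∈ P, ∀ b ∈ P, a ≠ b →
          Disjoint (S a (σ * h a / 2)) (S b (σ * h b / 2))) ∧
        (∀ y ∈ T, S y (σ * h y / 2) ⊆ ⋃ x ∈ P, S x (h x)) := by
  intro T
  induction T using Finset.strongInduction with
  | _ T IH =>
    intro hTD
    rcases T.eq_empty_or_nonempty with rfl | hne
    · exact ⟨∅, by simp, by simp, by simp⟩
    obtain ⟨x₀, hx₀T, hx₀max⟩ := T.exists_max_image h hne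
    have hhx₀ : 0 < h x₀ := hh x₀ (hTD x₀ hx₀T)
    have hgx₀ : 0 < σ * h x₀ / 2 := by positivity
    set T' := T.filter (fun y => Disjoint (S y (σ * h y / 2)) (S x₀ (σ * h x₀ / 2)))
      with hT'
    have hT'ss : T' ⊂ T := by
      refine Finset.filter_ssubset.mpr ⟨x₀, hx₀T, ?_⟩
      exact Set.not_disjoint_iff.mpr ⟨x₀, hmem x₀ _ hgx₀, hmem x₀ _ hgx₀⟩
    obtain ⟨P', hP'T', hdisj', hcov'⟩ :=
      IH T' hT'ss (fun y hy => hTD y (Finset.filter_subset _ _ hy))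
    have hP'disj : ∀ z ∈ P', Disjoint (S z (σ * h z / 2)) (S x₀ (σ * h x₀ / 2)) := by
      intro z hz
      exact (Finset.mem_filter.mp (hP'T' z hz)).2
    refine ⟨insert x₀ P', ?_, ?_, ?_⟩
    · intro p hp
      rcases Finset.mem_insert.mp hp with rfl | hp'
      · exact hx₀T
      · exact Finset.filter_subset _ _ (hP'T' p hp')
    · intro a ha b hb hab
      rcases Finset.mem_insert.mp ha with rfl | ha' <;>
        rcases Finset.mem_insert.mp hb with rfl | hb'
      · exact absurd rfl hab
      · exact (hP'disj b hb').symm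
      · exact hP'disj a ha'
      · exact hdisj' a ha' b hb' hab
    · intro y hyT
      by_cases hdy : Disjoint (S y (σ * h y / 2)) (S x₀ (σ * h x₀ / 2))
      · have hyT' : y ∈ T' := Finset.mem_filter.mpr ⟨hyT, hdy⟩
        refine (hcov' y hyT').trans ?_
        refine Set.iUnion₂_subset fun p hp => ?_
        exact Set.subset_biUnion_of_mem (u := fun x => S x (h x)) (Finset.mem_insert_of_mem hp)
      · obtain ⟨z, hz1, hz2⟩ := Set.not_disjoint_iff.mp hdy
        have hhy : 0 < h y := hh y (hTD y hyT)
        have hyle : h y ≤ h x₀ := hx₀max y hyT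
        have hgy : 0 < σ * h y / 2 := by positivity
        have hgle : σ * h y / 2 ≤ σ * h x₀ / 2 := by nlinarith
        have hsub1 : S y (σ * h y / 2) ⊆ S y (σ * h x₀ / 2) := hmono y _ _ hgy hgle
        have hne' : (S x₀ (σ * h x₀ / 2) ∩ S y (σ * h x₀ / 2)).Nonempty :=
          ⟨z, hz2, hsub1 hz1⟩
        have hsub2 : S y (σ * h x₀ / 2) ⊆ S x₀ ((σ * h x₀ / 2) / σ) :=
          heng x₀ y _ hgx₀ hne'
        have heq : (σ * h x₀ / 2) / σ = h x₀ / 2 := by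
          field_simp
        have hsub3 : S x₀ (h x₀ / 2) ⊆ S x₀ (h x₀) :=
          hmono x₀ _ _ (by positivity) (by linarith)
        have : S y (σ * h y / 2) ⊆ S x₀ (h x₀) := by
          rw [heq] at hsub2
          exact fun w hw => hsub3 (hsub2 (hsub1 hw))
        exact this.trans (Set.subset_biUnion_of_mem (u := fun x => S x (h x)) (Finset.mem_insert_self x₀ P'))

/-- Vitali-type covering theorem for families of "sections" `S(x,h)`
satisfying openness, monotonicity in `h`, and the engulfing property with constant
`σ ∈ (0,1)`: any compact set `D` with a bounded height function `h` can be covered by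
finitely many sections `S(xᵢ, h(xᵢ))` with `xᵢ ∈ D` such that the sections
`S(xᵢ, σ h(xᵢ)/2)` are pairwise disjoint. -/
theorem vitali_covering_sections {n : ℕ} (hn : 1 ≤ n)
    (σ : ℝ) (hσ0 : 0 < σ) (hσ1 : σ < 1)
    (S : EuclideanSpace ℝ (Fin n) → ℝ → Set (EuclideanSpace ℝ (Fin n)))
    (hopen : ∀ x (h : ℝ), 0 < h → IsOpen (S x h))
    (hmem : ∀ x (h : ℝ), 0 < h → x ∈ S x h)
    (hmono : ∀ x (h h' : ℝ), 0 < h → h ≤ h' → S x h ⊆ S x h')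
    (heng : ∀ x y (h : ℝ), 0 < h → (S x h ∩ S y h).Nonempty → S y h ⊆ S x (h / σ))
    (D : Set (EuclideanSpace ℝ (Fin n))) (hD : IsCompact D)
    (h : EuclideanSpace ℝ (Fin n) → ℝ) (hh : ∀ x ∈ D, 0 < h x)
    (H : ℝ) (hH : ∀ x ∈ D, h x ≤ H) :
    ∃ (m : ℕ) (x : Fin m → EuclideanSpace ℝ (Fin n)),
      (∀ i, x i ∈ D) ∧
      D ⊆ ⋃ i, S (x i) (h (x i)) ∧
      Pairwise fun i j => Disjoint (S (x i) (σ * h (x i) / 2)) (S (x j) (σ * h (x j) / 2)) := by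
  classical
  -- cover D by small sections and extract a finite subcover
  have hcover : D ⊆ ⋃ y ∈ D, S y (σ * h y / 2) := by
    intro y hy
    have : 0 < σ * h y / 2 := by have := hh y hy; positivity
    exact Set.mem_biUnion hy (hmem y _ this)
  obtain ⟨b', hb'D, hb'fin, hb'cov⟩ :=
    hD.elim_finite_subcover_image
      (fun y hy => hopen y _ (by have := hh y hy; positivity)) hcover
  set T : Finset (EuclideanSpace ℝ (Fin n)) := hb'fin.toFinset with hTdef
  have hTD : ∀ y ∈ T, y ∈ D := by
    intro y hy
    exact hb'D (by simpa [hTdef] using hy)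
  obtain ⟨P, hPT, hPdisj, hPcov⟩ :=
    vitali_aux_sections σ hσ0 S hmem hmono heng h D hh T hTD
  refine ⟨P.card, fun i => (P.equivFin.symm i : _), ?_, ?_, ?_⟩
  · intro i
    exact hTD _ (hPT _ (P.equivFin.symm i).2)
  · intro y hy
    obtain ⟨t, ht, hyt⟩ := Set.mem_iUnion₂.mp (hb'cov hy)
    have htT : t ∈ T := by simpa [hTdef] using ht
    have : y ∈ ⋃ x ∈ P, S x (h x) := hPcov t htT hyt
    obtain ⟨p, hp, hyp⟩ := Set.mem_iUnion₂.mp this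
    refine Set.mem_iUnion.mpr ⟨P.equivFin ⟨p, hp⟩, ?_⟩
    simpa using hyp
  · intro i j hij
    have hne : (P.equivFin.symm i : EuclideanSpace ℝ (Fin n)) ≠ P.equivFin.symm j := by
      intro hEq
      exact hij (P.equivFin.symm.injective (Subtype.coe_injective hEq))
    exact hPdisj _ (P.equivFin.symm i).2 _ (P.equivFin.symm j).2 hne
end

section
/- Let n ≥ 1, let v : ℝⁿ → ℝ be a C¹ function, let h > 0, and let q̄ ∈ ℝⁿ with v(q̄) = 0. For t > 0 set Q_t := {q ∈ ℝⁿ : v(q) ≤ t}. Assume that Q_h is convex and that there exist constants K₀ ≥ 1 and M > 0 such that: (a) for every q ∈ Q_h one has (q − q̄)/K₀ ∈ Q_{2h}; (b) Dv(p)·ξ ≤ M·h for every p ∈ Q_h and every ξ ∈ Q_{2h}. Then for every s ∈ (0, 1/(2K₀M)] and every q ∈ Q_h one has v(q̄ + s(q − q̄)) ≤ h/2; that is, q̄ + s(Q_h − q̄) ⊆ Q_{h/2}. -/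
/-- key inclusion in the proof of Proposition 2.2(ii). If `v` is `C¹`,
`v(q̄) = 0`, the sublevel set `Q_h = {v ≤ h}` is convex, `(q − q̄)/K₀ ∈ Q_{2h}` for all
`q ∈ Q_h`, and `Dv(p)·ξ ≤ M·h` for all `p ∈ Q_h`, `ξ ∈ Q_{2h}`, then for every
`s ∈ (0, 1/(2K₀M)]` and `q ∈ Q_h` one has `v(q̄ + s(q − q̄)) ≤ h/2`. -/
theorem section_dilation_inclusion {n : ℕ} (hn : 1 ≤ n)
    (v : EuclideanSpace ℝ (Fin n) → ℝ) (hv : ContDiff ℝ 1 v)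
    (h : ℝ) (hh : 0 < h)
    (qbar : EuclideanSpace ℝ (Fin n)) (hqbar : v qbar = 0)
    (K₀ M : ℝ) (hK₀ : 1 ≤ K₀) (hM : 0 < M)
    (hconv : Convex ℝ {q : EuclideanSpace ℝ (Fin n) | v q ≤ h})
    (ha : ∀ q ∈ {q : EuclideanSpace ℝ (Fin n) | v q ≤ h},
      (K₀⁻¹ : ℝ) • (q - qbar) ∈ {q : EuclideanSpace ℝ (Fin n) | v q ≤ 2 * h})
    (hb : ∀ p ∈ {q : EuclideanSpace ℝ (Fin n) | v q ≤ h},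
      ∀ ξ ∈ {q : EuclideanSpace ℝ (Fin n) | v q ≤ 2 * h}, fderiv ℝ v p ξ ≤ M * h) :
    ∀ s : ℝ, 0 < s → s ≤ 1 / (2 * K₀ * M) →
      ∀ q ∈ {q : EuclideanSpace ℝ (Fin n) | v q ≤ h},
        v (qbar + s • (q - qbar)) ≤ h / 2 := by
  intro s hs hs' q hq
  have hK₀0 : (0:ℝ) < K₀ := lt_of_lt_of_le one_pos hK₀
  set c : EuclideanSpace ℝ (Fin n) := s • (q - qbar) with hc
  -- derivative bound at points of Q_h
  have key : ∀ p, v p ≤ h → fderiv ℝ v p c ≤ h / 2 := by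
    intro p hp
    have h1 : fderiv ℝ v p (K₀⁻¹ • (q - qbar)) ≤ M * h := hb p hp _ (ha q hq)
    have h2 : fderiv ℝ v p c = (s * K₀) * fderiv ℝ v p (K₀⁻¹ • (q - qbar)) := by
      rw [hc, map_smul, map_smul, smul_eq_mul, smul_eq_mul]
      field_simp
    have h3 : s * K₀ * M ≤ 1 / 2 := by
      rw [le_div_iff₀ (by positivity)] at hs'
      nlinarith
    calc fderiv ℝ v p c = (s * K₀) * fderiv ℝ v p (K₀⁻¹ • (q - qbar)) := h2
      _ ≤ (s * K₀) * (M * h) := by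
          apply mul_le_mul_of_nonneg_left h1 (by positivity)
      _ = (s * K₀ * M) * h := by ring
      _ ≤ (1/2) * h := mul_le_mul_of_nonneg_right h3 hh.le
      _ = h / 2 := by ring
  -- path
  set γ : ℝ → EuclideanSpace ℝ (Fin n) := fun t => qbar + t • c with hγ
  have hγd : ∀ t : ℝ, HasDerivAt γ c t := by
    intro t
    have := ((hasDerivAt_id t).smul_const c).const_add qbar
    simp only [one_smul] at this
    exact this
  have hvd := (hv.differentiable one_ne_zero)
  have hfd : ∀ t : ℝ, HasDerivAt (fun t => v (γ t)) (fderiv ℝ v (γ t) c) t := by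
    intro t
    exact (hvd (γ t)).hasFDerivAt.comp_hasDerivAt t (hγd t)
  -- fencing for each ε ∈ (0, h/4]
  have main : ∀ ε : ℝ, 0 < ε → ε ≤ h / 4 → v (γ 1) ≤ h/2 * 1 + ε * (1 + 1) := by
    intro ε hε hε'
    have := image_le_of_deriv_right_lt_deriv_boundary
      (f := fun t => v (γ t)) (f' := fun t => fderiv ℝ v (γ t) c) (a := 0) (b := 1)
      (B := fun x => h/2 * x + ε * (x + 1)) (B' := fun _ => h/2 + ε)
      (fun t _ => ((hfd t).continuousAt).continuousWithinAt)
      (fun t _ => (hfd t).hasDerivWithinAt)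
      (by simp [hγ, hqbar]; positivity)
      (fun x => by
        have : HasDerivAt (fun x : ℝ => h/2 * x + ε * (x + 1)) (h/2 * 1 + ε * 1) x :=
          ((hasDerivAt_id x).const_mul (h/2)).add
            (((hasDerivAt_id x).add_const 1).const_mul ε)
        simpa using this)
      (fun x hx hfx => by
        have hfx' : v (γ x) = h/2 * x + ε * (x + 1) := hfx
        have hle : v (γ x) ≤ h := by
          rw [hfx']
          have hx0 := hx.1
          have hx1 := hx.2.le
          nlinarith
        exact lt_of_le_of_lt (key _ hle) (by linarith))
    exact this (Set.right_mem_Icc.2 zero_le_one)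
  have hγ1 : γ 1 = qbar + s • (q - qbar) := by simp [hγ, hc]
  rw [← hγ1]
  by_contra hcon
  push_neg at hcon
  set ε := min ((v (γ 1) - h/2) / 4) (h/4) with hεdef
  have hε : 0 < ε := lt_min (by linarith) (by linarith)
  have := main ε hε (min_le_right _ _)
  have hε2 : ε ≤ (v (γ 1) - h/2) / 4 := min_le_left _ _
  nlinarith
end

section
/- Let n ≥ 1, q̄ ∈ ℝⁿ, ρ > 0 and s ∈ (0,1), and for each h ∈ (0,ρ] let Q_h ⊆ ℝⁿ be a convex set with q̄ ∈ Q_h, such that Q_h ⊆ Q_{h'} whenever 0 < h ≤ h' ≤ ρ, and such that q̄ + s(Q_h − q̄) ⊆ Q_{h/2} for every h ∈ (0,ρ]. Then, with α := 2·log(1/s)/log 2, for every μ ∈ (0,1/2] and every h ∈ (0,ρ] one has q̄ + μ^α (Q_h − q̄) ⊆ Q_{μh}. -/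
/-- dyadic iteration. If the convex sets `Q_h ∋ q̄` (for `h ∈ (0,ρ]`) are
nondecreasing in `h` and satisfy the fixed-factor shrinking
`q̄ + s(Q_h − q̄) ⊆ Q_{h/2}`, then, with `α := 2·log(1/s)/log 2`, for every
`μ ∈ (0,1/2]` and `h ∈ (0,ρ]` one has `q̄ + μ^α (Q_h − q̄) ⊆ Q_{μh}`. -/
theorem dyadic_dilation_iteration {n : ℕ} (hn : 1 ≤ n)
    (qbar : EuclideanSpace ℝ (Fin n)) (ρ s : ℝ)
    (hρ : 0 < ρ) (hs0 : 0 < s) (hs1 : s < 1)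
    (Q : ℝ → Set (EuclideanSpace ℝ (Fin n)))
    (hconv : ∀ h : ℝ, 0 < h → h ≤ ρ → Convex ℝ (Q h))
    (hmem : ∀ h : ℝ, 0 < h → h ≤ ρ → qbar ∈ Q h)
    (hmono : ∀ h h' : ℝ, 0 < h → h ≤ h' → h' ≤ ρ → Q h ⊆ Q h')
    (hshrink : ∀ h : ℝ, 0 < h → h ≤ ρ → ∀ q ∈ Q h, qbar + s • (q - qbar) ∈ Q (h / 2)) :
    ∀ μ : ℝ, 0 < μ → μ ≤ 1 / 2 → ∀ h : ℝ, 0 < h → h ≤ ρ →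
      ∀ q ∈ Q h,
        qbar + (μ ^ (2 * Real.log (1 / s) / Real.log 2) : ℝ) • (q - qbar) ∈ Q (μ * h) := by
  -- iterated shrinking
  have iter : ∀ m : ℕ, ∀ h : ℝ, 0 < h → h ≤ ρ → ∀ q ∈ Q h,
      qbar + s ^ m • (q - qbar) ∈ Q (h / 2 ^ m) := by
    intro m
    induction m with
    | zero =>
      intro h h0 hρ' q hq
      simpa using hq
    | succ m ih =>
      intro h h0 hρ' q hq
      have h2m : (0:ℝ) < 2 ^ m := by positivity
      have hle : h / 2 ^ m ≤ ρ := by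
        have : h / 2 ^ m ≤ h := by
          rw [div_le_iff₀ h2m]
          nlinarith [one_le_pow₀ (n := m) (a := (2:ℝ)) one_le_two]
        linarith
      have hp := hshrink (h / 2 ^ m) (by positivity) hle _ (ih h h0 hρ' q hq)
      have e1 : h / 2 ^ m / 2 = h / 2 ^ (m + 1) := by ring
      have e2 : qbar + s • (qbar + s ^ m • (q - qbar) - qbar)
          = qbar + s ^ (m + 1) • (q - qbar) := by
        rw [add_sub_cancel_left, smul_smul, ← pow_succ']
      rw [e1, e2] at hp
      exact hp
  intro μ hμ0 hμ2 h h0 hhρ q hq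
  set α : ℝ := 2 * Real.log (1 / s) / Real.log 2 with hα
  have hα0 : 0 ≤ α := by
    apply div_nonneg _ (Real.log_nonneg one_le_two)
    have : 0 < Real.log (1 / s) := Real.log_pos (by rw [lt_div_iff₀ hs0]; linarith)
    linarith
  -- find k with (1/2)^(k+1) < μ ≤ (1/2)^k, k ≥ 1
  obtain ⟨N, hN⟩ := exists_pow_lt_of_lt_one hμ0 (by norm_num : (1/2:ℝ) < 1)
  have hex : ∃ m : ℕ, (1/2:ℝ) ^ m < μ := ⟨N, hN⟩
  have hmlt : (1/2:ℝ) ^ (Nat.find hex) < μ := Nat.find_spec hex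
  have hm2 : 2 ≤ Nat.find hex := by
    by_contra hc
    push_neg at hc
    have h1 : Nat.find hex ≤ 1 := by omega
    have h2 : (1/2:ℝ) ^ 1 ≤ (1/2:ℝ) ^ (Nat.find hex) :=
      pow_le_pow_of_le_one (by norm_num) (by norm_num) h1
    have h3 := lt_of_le_of_lt h2 hmlt
    norm_num at h3
    linarith
  set k : ℕ := Nat.find hex - 1 with hkdef
  have hkeq : Nat.find hex = k + 1 := by omega
  rw [hkeq] at hmlt
  have hk1 : 1 ≤ k := by omega
  have hμk : μ ≤ (1/2:ℝ) ^ k := not_lt.1 (Nat.find_min hex (by omega))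
  -- scale bound: μ^α ≤ s^(k+1)
  have hhalfα : (1/2:ℝ) ^ α = s ^ 2 := by
    rw [Real.rpow_def_of_pos (by norm_num)]
    have hlog : Real.log (1/2) * α = 2 * Real.log s := by
      have h2 : Real.log 2 ≠ 0 := ne_of_gt (Real.log_pos one_lt_two)
      rw [hα, one_div, one_div, Real.log_inv, Real.log_inv]
      field_simp
    rw [hlog]
    rw [show (2:ℝ) * Real.log s = (2:ℕ) * Real.log s by norm_num,
      Real.exp_nat_mul, Real.exp_log hs0]
  have hbound : μ ^ α ≤ s ^ (k + 1) := by
    have h1 : μ ^ α ≤ ((1/2:ℝ) ^ k) ^ α :=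
      Real.rpow_le_rpow hμ0.le hμk hα0
    have h2 : ((1/2:ℝ) ^ k) ^ α = ((1/2:ℝ) ^ α) ^ k := by
      rw [← Real.rpow_natCast (1/2 : ℝ) k, ← Real.rpow_mul (by norm_num),
        mul_comm, Real.rpow_mul (by norm_num), Real.rpow_natCast]
    have h3 : ((1/2:ℝ) ^ α) ^ k = s ^ (2 * k) := by
      rw [hhalfα, ← pow_mul]
    have h4 : s ^ (2 * k) ≤ s ^ (k + 1) :=
      pow_le_pow_of_le_one hs0.le hs1.le (by omega)
    calc μ ^ α ≤ ((1/2:ℝ) ^ k) ^ α := h1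
      _ = s ^ (2 * k) := by rw [h2, h3]
      _ ≤ s ^ (k + 1) := h4
  have hμh0 : 0 < μ * h := mul_pos hμ0 h0
  have hμhρ : μ * h ≤ ρ := le_trans (by nlinarith) hhρ
  -- the iterated point lies in Q (μ h)
  have hp : qbar + s ^ (k + 1) • (q - qbar) ∈ Q (μ * h) := by
    apply hmono (h / 2 ^ (k + 1)) (μ * h) (by positivity) _ hμhρ
    · exact iter (k + 1) h h0 hhρ q hq
    · have : (1/2:ℝ) ^ (k+1) * h ≤ μ * h := by nlinarith
      calc h / 2 ^ (k + 1) = (1/2:ℝ) ^ (k+1) * h := by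
            rw [div_eq_mul_inv, mul_comm, ← inv_pow]; norm_num
        _ ≤ μ * h := this
  -- convexity: pull the point back towards qbar
  have hsk0 : (0:ℝ) < s ^ (k + 1) := by positivity
  set t : ℝ := μ ^ α / s ^ (k + 1) with ht
  have ht0 : 0 ≤ t := div_nonneg (Real.rpow_nonneg hμ0.le _) hsk0.le
  have ht1 : t ≤ 1 := by
    rw [ht, div_le_one hsk0]; exact hbound
  have := hconv (μ * h) hμh0 hμhρ (hmem (μ * h) hμh0 hμhρ) hp
    (by linarith : (0:ℝ) ≤ 1 - t) ht0 (by ring)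
  have heq : (1 - t) • qbar + t • (qbar + s ^ (k + 1) • (q - qbar))
      = qbar + μ ^ α • (q - qbar) := by
    have : t * s ^ (k + 1) = μ ^ α := by
      rw [ht]; field_simp
    rw [smul_add, smul_smul, this]
    module
  rw [heq] at this
  exact this
end
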